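/- arXiv:2211.12068 — 7 statements merged into one kernel-verified Lean document; each statement's English description precedes it below -/
import Mathlib

section
/- Let G be a group equipped with a bi-invariant linear order. Then G is locally indicable: every finitely generated subgroup H of G with H ≠ ⊥ admits a surjective group homomorphism onto the infinite cyclic group ℤ. -/
/-! Auxiliary machinery: a bi-ordered group with the archimedean property is abelian
(Hölder), and in a finitely generated bi-ordered group the set of elements all of whose
powers stay below the top generator forms a normal convex subgroup with
archimedean (hence abelian, f.g., torsion-free) quotient, which surjects onto `ℤ`. -/

set_option linter.unusedSectionVars false
set_option maxHeartbeats 1000000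

section BiOrderedLocallyIndicable
variable {K : Type*} [Group K] [LinearOrder K] [MulLeftStrictMono K] [MulRightStrictMono K]

private lemma bli.mlm : MulLeftMono K := mulLeftMono_of_mulLeftStrictMono K
private lemma bli.mrm : MulRightMono K := mulRightMono_of_mulRightStrictMono K
attribute [local instance] bli.mlm bli.mrm

private lemma bli.one_lt_zpow {a : K} (ha : 1 < a) {n : ℤ} (hn : 0 < n) : 1 < a ^ n := by
  lift n to ℕ using hn.le
  rw [zpow_natCast]
  exact one_lt_pow' ha (by exact_mod_cast hn.ne')


private lemma bli.zpow_lt_zpow {a : K} (ha : 1 < a) {m n : ℤ} (h : m < n) : a ^ m < a ^ n := by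
  have h1 : 1 < a ^ (n - m) := bli.one_lt_zpow ha (by omega)
  calc a ^ m = a ^ m * 1 := (mul_one _).symm
  _ < a ^ m * a ^ (n - m) := mul_lt_mul_right h1 _
  _ = a ^ n := by rw [← zpow_add]; ring_nf


private lemma bli.exists_zpow_le_lt (arch : ∀ x y : K, 1 < x → ∃ n : ℕ, y ≤ x ^ n)
    {a : K} (ha : 1 < a) (g : K) : ∃ m : ℤ, a ^ m ≤ g ∧ g < a ^ (m + 1) := by
  obtain ⟨n, hn⟩ := arch a g ha
  obtain ⟨n', hn'⟩ := arch a g⁻¹ ha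
  have Hbdd : ∃ b : ℤ, ∀ z : ℤ, a ^ z ≤ g → z ≤ b := by
    refine ⟨n, fun z hz => ?_⟩
    by_contra hlt
    have : a ^ (n : ℤ) < a ^ z := bli.zpow_lt_zpow ha (by omega)
    rw [zpow_natCast] at this
    exact absurd (hz.trans hn) (not_le.mpr this)
  have Hinh : ∃ z : ℤ, a ^ z ≤ g := by
    refine ⟨-(n' : ℤ), ?_⟩
    rw [zpow_neg, zpow_natCast]
    exact inv_le_of_inv_le' hn'
  obtain ⟨m, hm, hub⟩ := Int.exists_greatest_of_bdd Hbdd Hinh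
  refine ⟨m, hm, ?_⟩
  by_contra h
  exact absurd (hub (m + 1) (not_lt.mp h)) (by omega)

private lemma bli.holder_comm (arch : ∀ x y : K, 1 < x → ∃ n : ℕ, y ≤ x ^ n)
    (a b : K) : a * b = b * a := by
  have claim : ∀ a b : K, ¬ 1 < (a * b) * (b * a)⁻¹ := by
    intro a b hc
    set c := (a * b) * (b * a)⁻¹ with hcdef
    -- find ε with 1 < ε and ε * ε ≤ c
    have hε : ∃ ε : K, 1 < ε ∧ ε * ε ≤ c := by
      by_cases hd : ∃ d, 1 < d ∧ d < c
      · obtain ⟨d, hd1, hdc⟩ := hd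
        rcases le_or_gt (d * d) c with h | h
        · exact ⟨d, hd1, h⟩
        · refine ⟨c * d⁻¹, ?_, ?_⟩
          · have := mul_lt_mul_left hdc d⁻¹
            rwa [mul_inv_cancel] at this
          · have h1 : d⁻¹ * c < d := by
              have := mul_lt_mul_right h d⁻¹
              rwa [inv_mul_cancel_left] at this
            have h2 : d⁻¹ * c * d⁻¹ < 1 := by
              have := mul_lt_mul_left h1 d⁻¹
              rwa [mul_inv_cancel] at this
            calc c * d⁻¹ * (c * d⁻¹) = c * (d⁻¹ * c * d⁻¹) := by group
            _ ≤ c * 1 := (mul_le_mul_right h2.le c)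
            _ = c := mul_one c
      · push_neg at hd
        -- c is the least element > 1 : everything is a power of c
        have hpow : ∀ g : K, ∃ m : ℤ, g = c ^ m := by
          intro g
          obtain ⟨m, h1, h2⟩ := bli.exists_zpow_le_lt arch hc g
          refine ⟨m, ?_⟩
          have hu1 : 1 ≤ (c ^ m)⁻¹ * g := by
            have := mul_le_mul_right h1 (c ^ m)⁻¹
            rwa [inv_mul_cancel] at this
          have hu2 : (c ^ m)⁻¹ * g < c := by
            have := mul_lt_mul_right h2 (c ^ m)⁻¹
            rwa [zpow_add_one, inv_mul_cancel_left] at this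
          have : ¬ 1 < (c ^ m)⁻¹ * g := fun h => absurd (hd _ h) (not_le.mpr hu2)
          have he : (c ^ m)⁻¹ * g = 1 := le_antisymm (not_lt.mp this) hu1
          exact (inv_mul_eq_one.mp he).symm
        obtain ⟨p, hp⟩ := hpow a
        obtain ⟨q, hq⟩ := hpow b
        have : c = 1 := by
          rw [hcdef, hp, hq, ← zpow_add, ← zpow_add, add_comm, mul_inv_cancel]
        exact absurd (this ▸ hc) (lt_irrefl 1)
    obtain ⟨ε, hε1, hεc⟩ := hε
    obtain ⟨m, ham, ham'⟩ := bli.exists_zpow_le_lt arch hε1 a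
    obtain ⟨n, hbn, hbn'⟩ := bli.exists_zpow_le_lt arch hε1 b
    have h1 : a * b < ε ^ (m + 1) * ε ^ (n + 1) := mul_lt_mul_of_lt_of_lt ham' hbn'
    have h2 : a⁻¹ * b⁻¹ ≤ ε ^ (-m) * ε ^ (-n) := by
      have ha' : a⁻¹ ≤ ε ^ (-m) := by rw [zpow_neg]; exact inv_le_inv_iff.mpr ham
      have hb' : b⁻¹ ≤ ε ^ (-n) := by rw [zpow_neg]; exact inv_le_inv_iff.mpr hbn
      exact mul_le_mul' ha' hb'
    have h3 : c < ε ^ (m + 1) * ε ^ (n + 1) * (ε ^ (-m) * ε ^ (-n)) := by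
      have : c = (a * b) * (a⁻¹ * b⁻¹) := by rw [hcdef]; group
      rw [this]
      exact mul_lt_mul_of_lt_of_le h1 h2
    have h4 : ε ^ (m + 1) * ε ^ (n + 1) * (ε ^ (-m) * ε ^ (-n)) = ε * ε := by
      rw [← zpow_add, ← zpow_add, ← zpow_add]
      have : m + 1 + (n + 1) + (-m + -n) = 2 := by ring
      rw [this]
      rw [zpow_two]
    rw [h4] at h3
    exact absurd hεc (not_le.mpr h3)
  have h1 := claim a b
  have h2 := claim b a
  have e : (b * a) * (a * b)⁻¹ = ((a * b) * (b * a)⁻¹)⁻¹ := by group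
  rw [e] at h2
  have : (a * b) * (b * a)⁻¹ = 1 := by
    rcases lt_trichotomy ((a * b) * (b * a)⁻¹) 1 with h | h | h
    · exact absurd (one_lt_inv_of_inv h) h2
    · exact h
    · exact absurd h h1
  have := mul_eq_one_iff_eq_inv.mp this
  rwa [inv_inv] at this

private lemma bli.one_le_M (x : K) : 1 ≤ max x x⁻¹ := by
  rcases le_total 1 x with h | h
  · exact h.trans (le_max_left _ _)
  · exact (one_le_inv'.mpr h).trans (le_max_right _ _)

private lemma bli.M_inv (x : K) : max x⁻¹ x⁻¹⁻¹ = max x x⁻¹ := by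
  rw [inv_inv, max_comm]

private lemma bli.M_pow (x : K) (n : ℕ) : (max x x⁻¹) ^ n = max (x ^ n) (x ^ n)⁻¹ := by
  rcases le_total 1 x with h | h
  · rw [max_eq_left ((inv_le_one'.mpr h).trans h),
      max_eq_left ((inv_le_one'.mpr (Left.one_le_pow_of_le h n)).trans (Left.one_le_pow_of_le h n))]
  · rw [max_eq_right (h.trans (one_le_inv'.mpr h)),
      max_eq_right ((Left.pow_le_one_of_le h n).trans (one_le_inv'.mpr (Left.pow_le_one_of_le h n))),
      inv_pow]

/-- The convex subgroup of elements infinitely smaller than `t`. -/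
private def bli.C (t : K) (ht : 1 < t) : Subgroup K where
  carrier := {x | ∀ n : ℕ, (max x x⁻¹) ^ n < t}
  one_mem' := by
    intro n
    simp only [inv_one, max_self, one_pow]
    exact ht
  inv_mem' := by
    intro x hx n
    rw [bli.M_inv]
    exact hx n
  mul_mem' := by
    intro x y hx hy n
    set c := max (max x x⁻¹) (max y y⁻¹) with hc
    have hcn : ∀ m : ℕ, c ^ m < t := by
      intro m
      rcases max_cases (max x x⁻¹) (max y y⁻¹) with ⟨h, _⟩ | ⟨h, _⟩
      · rw [hc, h]; exact hx m
      · rw [hc, h]; exact hy m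
    have h1 : max (x * y) (x * y)⁻¹ ≤ c * c := by
      apply max_le
      · exact mul_le_mul' ((le_max_left _ _).trans (le_max_left _ _))
          ((le_max_left _ _).trans (le_max_right _ _))
      · rw [mul_inv_rev]
        exact mul_le_mul' ((le_max_right _ _).trans (le_max_right _ _))
          ((le_max_right _ _).trans (le_max_left _ _))
    calc (max (x * y) (x * y)⁻¹) ^ n ≤ (c * c) ^ n := pow_le_pow_left' h1 n
    _ = c ^ (2 * n) := by rw [← pow_two, ← pow_mul]
    _ < t := hcn _

private lemma bli.mem_C {t : K} {ht : 1 < t} {x : K} :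
    x ∈ bli.C t ht ↔ ∀ n : ℕ, (max x x⁻¹) ^ n < t := Iff.rfl

private lemma bli.mem_of_M_le {t : K} {ht : 1 < t} {x y : K}
    (h : max x x⁻¹ ≤ max y y⁻¹) (hy : y ∈ bli.C t ht) : x ∈ bli.C t ht :=
  fun n => lt_of_le_of_lt (pow_le_pow_left' h n) (hy n)

/-- negative non-members are below all members -/
private lemma bli.lt_of_not_mem {t : K} {ht : 1 < t} {v γ : K}
    (hv : v ∉ bli.C t ht) (hv1 : v < 1) (hγ : γ ∈ bli.C t ht) : v < γ := by
  by_contra h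
  push_neg at h
  apply hv
  apply bli.mem_of_M_le (y := γ) ?_ hγ
  have h1 : max v v⁻¹ = v⁻¹ := max_eq_right (hv1.le.trans (one_le_inv'.mpr hv1.le))
  rw [h1]
  exact (inv_le_inv_iff.mpr h).trans (le_max_right _ _)

private lemma bli.mem_C_of_pow {t : K} {ht : 1 < t} {x : K} {n : ℕ} (hn : n ≠ 0)
    (h : x ^ n ∈ bli.C t ht) : x ∈ bli.C t ht := by
  intro m
  have h2 := h m
  rw [← bli.M_pow, ← pow_mul] at h2
  calc (max x x⁻¹) ^ m ≤ (max x x⁻¹) ^ (n * m) :=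
    pow_le_pow_right' (bli.one_le_M x) (Nat.le_mul_of_pos_left m (Nat.pos_of_ne_zero hn))
  _ < t := h2

private lemma bli.C_normal {t : K} {ht : 1 < t}
    (htop : ∀ g : K, ∃ k : ℕ, g ≤ t ^ k ∧ g⁻¹ ≤ t ^ k) : (bli.C t ht).Normal := by
  constructor
  intro x hx h
  -- key: conjugates of "small" positive elements stay below t
  have key : ∀ a : K, 1 ≤ a → (∀ i : ℕ, a ^ i < t) → h * a * h⁻¹ < t := by
    intro a ha hsmall
    by_contra hcon
    push_neg at hcon
    obtain ⟨k, hk, hk'⟩ := htop h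
    have hb : ∀ i : ℕ, t ^ i ≤ t ^ k * a ^ i * t ^ k := by
      intro i
      calc t ^ i ≤ (h * a * h⁻¹) ^ i := pow_le_pow_left' hcon i
      _ = h * a ^ i * h⁻¹ := conj_pow
      _ ≤ t ^ k * a ^ i * t ^ k := mul_le_mul' (mul_le_mul' hk (le_refl _)) hk'
    have hlt : t ^ k * a ^ (2 * k + 1) * t ^ k < t ^ (2 * k + 1) := by
      calc t ^ k * a ^ (2 * k + 1) * t ^ k < t ^ k * t * t ^ k :=
        mul_lt_mul_left (mul_lt_mul_right (hsmall _) _) _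
      _ = t ^ (2 * k + 1) := by rw [← pow_succ, ← pow_add]; congr 1; omega
    exact absurd (hb (2 * k + 1)) (not_le.mpr hlt)
  intro n
  set a := max (x ^ n) (x ^ n)⁻¹ with hadef
  have ha1 : 1 ≤ a := bli.one_le_M _
  have hai : ∀ i, a ^ i < t := by
    intro i
    rw [hadef, ← bli.M_pow, ← pow_mul]
    exact hx _
  have hkey := key a ha1 hai
  rw [bli.M_pow]
  apply max_lt
  · calc (h * x * h⁻¹) ^ n = h * x ^ n * h⁻¹ := conj_pow
    _ ≤ h * a * h⁻¹ := mul_le_mul' (mul_le_mul' (le_refl h) (le_max_left _ _)) (le_refl _)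
    _ < t := hkey
  · calc ((h * x * h⁻¹) ^ n)⁻¹ = h * (x ^ n)⁻¹ * h⁻¹ := by rw [conj_pow]; group
    _ ≤ h * a * h⁻¹ := mul_le_mul' (mul_le_mul' (le_refl h) (le_max_right _ _)) (le_refl _)
    _ < t := hkey

-- product of two positive non-members is a non-member
private lemma bli.mul_not_mem {t : K} {ht : 1 < t} {u v : K}
    (hu1 : 1 < u) (hu : u ∉ bli.C t ht) (hv1 : 1 < v) : u * v ∉ bli.C t ht := by
  intro hmem
  apply hu
  apply bli.mem_of_M_le (y := u * v) ?_ hmem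
  have h1 : u ≤ u * v := by
    calc u = u * 1 := (mul_one u).symm
    _ ≤ u * v := mul_le_mul_right hv1.le u
  calc max u u⁻¹ = u := max_eq_left ((inv_le_one'.mpr hu1.le).trans hu1.le)
  _ ≤ u * v := h1
  _ ≤ max (u * v) (u * v)⁻¹ := le_max_left _ _

private lemma bli.lt_wd {t : K} {ht : 1 < t} {a b a' b' : K}
    (ha : a⁻¹ * a' ∈ bli.C t ht) (hb : b⁻¹ * b' ∈ bli.C t ht)
    (h : a < b ∧ a⁻¹ * b ∉ bli.C t ht) : a' < b' ∧ a'⁻¹ * b' ∉ bli.C t ht := by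
  obtain ⟨hab, hnC⟩ := h
  have hnC' : a'⁻¹ * b' ∉ bli.C t ht := by
    intro hmem
    apply hnC
    have e : a⁻¹ * b = (a⁻¹ * a') * ((a'⁻¹ * b') * (b⁻¹ * b')⁻¹) := by group
    rw [e]
    exact mul_mem ha (mul_mem hmem (inv_mem hb))
  refine ⟨?_, hnC'⟩
  by_contra hle
  push_neg at hle  -- b' ≤ a'
  have hv1 : b⁻¹ * a < 1 := by
    have := mul_lt_mul_right hab b⁻¹
    rwa [inv_mul_cancel] at this
  have hvC : b⁻¹ * a ∉ bli.C t ht := by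
    intro hmem
    exact hnC (by have := inv_mem hmem; rwa [mul_inv_rev, inv_inv] at this)
  have hγ : (b⁻¹ * b') * (a⁻¹ * a')⁻¹ ∈ bli.C t ht := mul_mem hb (inv_mem ha)
  have h1 : b⁻¹ * a < (b⁻¹ * b') * (a⁻¹ * a')⁻¹ := bli.lt_of_not_mem hvC hv1 hγ
  have h2 : (b⁻¹ * a) * (a⁻¹ * a') < b⁻¹ * b' := by
    have := mul_lt_mul_left h1 (a⁻¹ * a')
    rwa [inv_mul_cancel_right] at this
  have h3 : (b⁻¹ * b')⁻¹ * ((b⁻¹ * a) * (a⁻¹ * a')) < 1 := by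
    have := mul_lt_mul_right h2 (b⁻¹ * b')⁻¹
    rwa [inv_mul_cancel] at this
  have e2 : (b⁻¹ * b')⁻¹ * ((b⁻¹ * a) * (a⁻¹ * a')) = b'⁻¹ * a' := by group
  rw [e2] at h3
  have h4 : 1 ≤ b'⁻¹ * a' := by
    have := mul_le_mul_right hle b'⁻¹
    rwa [inv_mul_cancel] at this
  exact absurd h3 (not_lt.mpr h4)

private def bli.Qlt (t : K) (ht : 1 < t) :
    K ⧸ bli.C t ht → K ⧸ bli.C t ht → Prop :=
  Quotient.lift₂ (fun a b => a < b ∧ a⁻¹ * b ∉ bli.C t ht)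
    (fun a b a' b' ha hb => by
      have ha' := QuotientGroup.leftRel_apply.mp ha
      have hb' := QuotientGroup.leftRel_apply.mp hb
      exact propext ⟨fun h => bli.lt_wd ha' hb' h,
        fun h => bli.lt_wd (by simpa using inv_mem ha') (by simpa using inv_mem hb') h⟩)

private lemma bli.Qlt_mk {t : K} {ht : 1 < t} {a b : K} :
    bli.Qlt t ht (a : K ⧸ bli.C t ht) (b : K ⧸ bli.C t ht) ↔
      a < b ∧ a⁻¹ * b ∉ bli.C t ht := Iff.rfl

private lemma bli.Qlt_trans {t : K} {ht : 1 < t} {q r s : K ⧸ bli.C t ht}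
    (h1 : bli.Qlt t ht q r) (h2 : bli.Qlt t ht r s) : bli.Qlt t ht q s := by
  induction q using QuotientGroup.induction_on with | _ a =>
  induction r using QuotientGroup.induction_on with | _ b =>
  induction s using QuotientGroup.induction_on with | _ c =>
  rw [bli.Qlt_mk] at h1 h2 ⊢
  refine ⟨h1.1.trans h2.1, ?_⟩
  have e : a⁻¹ * c = (a⁻¹ * b) * (b⁻¹ * c) := by group
  rw [e]
  have hub : 1 < a⁻¹ * b := by
    have := mul_lt_mul_right h1.1 a⁻¹
    rwa [inv_mul_cancel] at this
  have hvc : 1 < b⁻¹ * c := by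
    have := mul_lt_mul_right h2.1 b⁻¹
    rwa [inv_mul_cancel] at this
  exact bli.mul_not_mem hub h1.2 hvc

private lemma bli.Qlt_asymm {t : K} {ht : 1 < t} {q r : K ⧸ bli.C t ht}
    (h1 : bli.Qlt t ht q r) : ¬ bli.Qlt t ht r q := by
  induction q using QuotientGroup.induction_on with | _ a =>
  induction r using QuotientGroup.induction_on with | _ b =>
  rw [bli.Qlt_mk] at h1 ⊢
  intro h2
  exact absurd h1.1 (not_lt.mpr h2.1.le)

private lemma bli.Qlt_total {t : K} {ht : 1 < t} (q r : K ⧸ bli.C t ht) :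
    q = r ∨ bli.Qlt t ht q r ∨ bli.Qlt t ht r q := by
  induction q using QuotientGroup.induction_on with | _ a =>
  induction r using QuotientGroup.induction_on with | _ b =>
  by_cases hC : a⁻¹ * b ∈ bli.C t ht
  · exact Or.inl (QuotientGroup.eq.mpr hC)
  · have hne : a ≠ b := fun h => hC (by rw [h, inv_mul_cancel]; exact one_mem _)
    rcases hne.lt_or_gt with h | h
    · exact Or.inr (Or.inl ⟨h, hC⟩)
    · refine Or.inr (Or.inr ⟨h, fun hmem => hC ?_⟩)
      have := inv_mem hmem
      rwa [mul_inv_rev, inv_inv] at this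

private noncomputable def bli.QLO (t : K) (ht : 1 < t) : LinearOrder (K ⧸ bli.C t ht) where
  lt := bli.Qlt t ht
  le q r := q = r ∨ bli.Qlt t ht q r
  le_refl q := Or.inl rfl
  le_trans q r s h1 h2 := by
    rcases h1 with rfl | h1
    · exact h2
    rcases h2 with rfl | h2
    · exact Or.inr h1
    · exact Or.inr (bli.Qlt_trans h1 h2)
  lt_iff_le_not_ge q r := by
    constructor
    · intro h
      refine ⟨Or.inr h, ?_⟩
      rintro (rfl | h2)
      · exact bli.Qlt_asymm h h
      · exact bli.Qlt_asymm h h2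
    · rintro ⟨rfl | h1, h2⟩
      · exact absurd (Or.inl rfl) h2
      · exact h1
  le_antisymm q r h1 h2 := by
    rcases h1 with rfl | h1
    · rfl
    rcases h2 with rfl | h2
    · rfl
    · exact absurd h2 (bli.Qlt_asymm h1)
  le_total q r := by
    rcases bli.Qlt_total (ht := ht) q r with h | h | h
    · exact Or.inl (Or.inl h)
    · exact Or.inl (Or.inr h)
    · exact Or.inr (Or.inr h)
  toDecidableLE := Classical.decRel _

private lemma bli.QLO_lt (t : K) (ht : 1 < t) : (bli.QLO t ht).lt = bli.Qlt t ht := rfl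


private theorem bli.main (hfg : Group.FG K) [Nontrivial K] :
    ∃ φ : K →* Multiplicative ℤ, Function.Surjective φ := by
  classical
  obtain ⟨S, hS⟩ := hfg.out
  set T : Finset K := insert 1 (S.image fun s => max s s⁻¹) with hT
  have hTne : (1 : K) ∈ T := Finset.mem_insert_self _ _
  set t : K := T.max' ⟨1, hTne⟩ with htdef
  have ht1 : (1 : K) ≤ t := T.le_max' 1 hTne
  have hts : ∀ s ∈ S, max s s⁻¹ ≤ t := fun s hs =>
    T.le_max' _ (Finset.mem_insert_of_mem (Finset.mem_image_of_mem _ hs))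
  have ht : 1 < t := by
    rcases lt_or_eq_of_le ht1 with h | h
    · exact h
    exfalso
    have hs1 : ∀ s ∈ S, s = 1 := by
      intro s hs
      have h1 : s ≤ 1 := le_trans (le_max_left s s⁻¹) (le_trans (hts s hs) h.symm.le)
      have h2 : s⁻¹ ≤ 1 := le_trans (le_max_right s s⁻¹) (le_trans (hts s hs) h.symm.le)
      exact le_antisymm h1 (inv_le_one'.mp h2)
    have hsub : (S : Set K) ⊆ ((⊥ : Subgroup K) : Set K) := by
      intro s hs
      simp only [Subgroup.coe_bot, Set.mem_singleton_iff]
      exact hs1 s hs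
    have hle : (⊤ : Subgroup K) ≤ ⊥ := hS ▸ Subgroup.closure_le ⊥ |>.mpr hsub
    obtain ⟨x, y, hxy⟩ := exists_pair_ne K
    have hx := Subgroup.mem_bot.mp (hle (Subgroup.mem_top x))
    have hy := Subgroup.mem_bot.mp (hle (Subgroup.mem_top y))
    exact hxy (hx.trans hy.symm)
  -- every element is bounded by a power of t
  have htop : ∀ g : K, ∃ k : ℕ, g ≤ t ^ k ∧ g⁻¹ ≤ t ^ k := by
    intro g
    have hg : g ∈ Subgroup.closure (S : Set K) := hS ▸ Subgroup.mem_top g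
    induction hg using Subgroup.closure_induction with
    | mem s hs =>
      exact ⟨1, by rw [pow_one]; exact (le_max_left s s⁻¹).trans (hts s hs),
        by rw [pow_one]; exact (le_max_right s s⁻¹).trans (hts s hs)⟩
    | one => exact ⟨0, by rw [pow_zero]; exact ⟨le_refl 1, by rw [inv_one]⟩⟩
    | mul x y hx hy ihx ihy =>
      obtain ⟨k, hk1, hk2⟩ := ihx
      obtain ⟨l, hl1, hl2⟩ := ihy
      refine ⟨k + l, ?_, ?_⟩
      · rw [pow_add]; exact mul_le_mul' hk1 hl1
      · rw [mul_inv_rev, add_comm, pow_add]; exact mul_le_mul' hl2 hk2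
    | inv x hx ihx =>
      obtain ⟨k, hk1, hk2⟩ := ihx
      exact ⟨k, hk2, by rwa [inv_inv]⟩
  -- the convex subgroup and quotient
  haveI hN : (bli.C t ht).Normal := bli.C_normal htop
  letI QLO : LinearOrder (K ⧸ bli.C t ht) := bli.QLO t ht
  have hlt_iff : ∀ a b : K, (a : K ⧸ bli.C t ht) < (b : K ⧸ bli.C t ht) ↔
      a < b ∧ a⁻¹ * b ∉ bli.C t ht := by
    intro a b
    have := congrFun (congrFun (bli.QLO_lt t ht) (a : K ⧸ bli.C t ht)) (b : K ⧸ bli.C t ht)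
    rw [show ((a : K ⧸ bli.C t ht) < b) = QLO.lt a b from rfl, this]
    exact bli.Qlt_mk
  haveI hL : MulLeftStrictMono (K ⧸ bli.C t ht) := by
    constructor
    intro q r s h
    induction q using QuotientGroup.induction_on with | _ c =>
    induction r using QuotientGroup.induction_on with | _ a =>
    induction s using QuotientGroup.induction_on with | _ b =>
    show (c : K ⧸ bli.C t ht) * a < (c : K ⧸ bli.C t ht) * b
    rw [← QuotientGroup.mk_mul, ← QuotientGroup.mk_mul]
    rw [hlt_iff] at h ⊢
    refine ⟨mul_lt_mul_right h.1 c, fun hmem => h.2 ?_⟩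
    have e : (c * a)⁻¹ * (c * b) = a⁻¹ * b := by group
    rwa [e] at hmem
  haveI hR : MulRightStrictMono (K ⧸ bli.C t ht) := by
    constructor
    intro q r s h
    induction q using QuotientGroup.induction_on with | _ c =>
    induction r using QuotientGroup.induction_on with | _ a =>
    induction s using QuotientGroup.induction_on with | _ b =>
    show (a : K ⧸ bli.C t ht) * c < (b : K ⧸ bli.C t ht) * c
    rw [← QuotientGroup.mk_mul, ← QuotientGroup.mk_mul]
    rw [hlt_iff] at h ⊢
    refine ⟨mul_lt_mul_left h.1 c, fun hmem => h.2 ?_⟩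
    have e : (a * c)⁻¹ * (b * c) = c⁻¹ * (a⁻¹ * b) * c := by group
    rw [e] at hmem
    have := hN.conj_mem _ hmem c
    have e2 : c * (c⁻¹ * (a⁻¹ * b) * c) * c⁻¹ = a⁻¹ * b := by group
    rwa [e2] at this
  -- mk is monotone
  have mkmono : ∀ a b : K, a ≤ b → (a : K ⧸ bli.C t ht) ≤ (b : K ⧸ bli.C t ht) := by
    intro a b hab
    by_cases hC : a⁻¹ * b ∈ bli.C t ht
    · exact le_of_eq (QuotientGroup.eq.mpr hC)
    · have hne : a ≠ b := fun h => hC (by rw [h, inv_mul_cancel]; exact one_mem _)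
      exact le_of_lt ((hlt_iff a b).mpr ⟨hab.lt_of_ne hne, hC⟩)
  -- archimedean property of the quotient
  have arch : ∀ x y : K ⧸ bli.C t ht, 1 < x → ∃ n : ℕ, y ≤ x ^ n := by
    intro x y hx
    induction x using QuotientGroup.induction_on with | _ ε =>
    induction y using QuotientGroup.induction_on with | _ g =>
    rw [show (1 : K ⧸ bli.C t ht) = ((1 : K) : K ⧸ bli.C t ht) from rfl, hlt_iff] at hx
    obtain ⟨hε1, hεC⟩ := hx
    rw [inv_one, one_mul] at hεC
    -- ε ∉ C gives a power of ε above t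
    have hMε : max ε ε⁻¹ = ε := max_eq_left ((inv_le_one'.mpr hε1.le).trans hε1.le)
    obtain ⟨n₀, hn₀⟩ : ∃ n₀ : ℕ, t ≤ ε ^ n₀ := by
      by_contra hcon
      push_neg at hcon
      exact hεC (fun n => by rw [show (max ε ε⁻¹) = ε from hMε]; exact hcon n)
    obtain ⟨k, hk, _⟩ := htop g
    refine ⟨n₀ * k, ?_⟩
    have : g ≤ ε ^ (n₀ * k) := by
      calc g ≤ t ^ k := hk
      _ ≤ (ε ^ n₀) ^ k := pow_le_pow_left' hn₀ k
      _ = ε ^ (n₀ * k) := by rw [← pow_mul]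
    calc (g : K ⧸ bli.C t ht) ≤ ((ε ^ (n₀ * k) : K) : K ⧸ bli.C t ht) := mkmono _ _ this
    _ = (ε : K ⧸ bli.C t ht) ^ (n₀ * k) := rfl
  -- the quotient is abelian
  have comm : ∀ p q : K ⧸ bli.C t ht, p * q = q * p := bli.holder_comm arch
  -- the quotient is nontrivial
  obtain ⟨s₀, hs₀mem, hs₀⟩ : ∃ s₀ ∈ S, max s₀ s₀⁻¹ = t := by
    have := T.max'_mem ⟨1, hTne⟩
    rw [← htdef, hT] at this
    rcases Finset.mem_insert.mp this with h | h
    · exact absurd h.symm (ne_of_lt ht)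
    · obtain ⟨s₀, hmem, he⟩ := Finset.mem_image.mp h
      exact ⟨s₀, hmem, he⟩
  have hs₀C : s₀ ∉ bli.C t ht := by
    intro hmem
    have := hmem 1
    rw [pow_one, hs₀] at this
    exact lt_irrefl t this
  haveI : Nontrivial (K ⧸ bli.C t ht) :=
    ⟨(s₀ : K ⧸ bli.C t ht), 1, fun h => hs₀C ((QuotientGroup.eq_one_iff s₀).mp h)⟩
  -- torsion-freeness
  have tf : ∀ (q : K ⧸ bli.C t ht) (n : ℕ), n ≠ 0 → q ^ n = 1 → q = 1 := by
    intro q n hn hq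
    induction q using QuotientGroup.induction_on with | _ g =>
    rw [← QuotientGroup.mk_pow, QuotientGroup.eq_one_iff] at hq
    rw [QuotientGroup.eq_one_iff]
    exact bli.mem_C_of_pow hn hq
  -- set up the ℤ-module structure on the additivization
  letI iACG : AddCommGroup (Additive (K ⧸ bli.C t ht)) :=
    { (inferInstance : AddGroup (Additive (K ⧸ bli.C t ht))) with
      add_comm := fun p q => comm p.toMul q.toMul }
  letI iMod : Module ℤ (Additive (K ⧸ bli.C t ht)) := AddCommGroup.toIntModule _
  haveI hQfg : Group.FG (K ⧸ bli.C t ht) := by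
    haveI : Group.FG K := hfg
    exact Group.fg_of_surjective (f := QuotientGroup.mk' (bli.C t ht))
      (QuotientGroup.mk'_surjective _)
  haveI hAfg : AddGroup.FG (Additive (K ⧸ bli.C t ht)) := GroupFG.iff_add_fg.mp hQfg
  haveI : Module.Finite ℤ (Additive (K ⧸ bli.C t ht)) := Module.Finite.iff_addGroup_fg.mpr hAfg
  haveI : NoZeroSMulDivisors ℤ (Additive (K ⧸ bli.C t ht)) := by
    constructor
    intro n x h
    by_cases hn : n = 0
    · exact Or.inl hn
    refine Or.inr ?_
    have h1 : x.toMul ^ n = 1 := by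
      have := congrArg Additive.toMul h
      rwa [toMul_zsmul] at this
    have h2 : x.toMul ^ (n.natAbs) = 1 := by
      rcases Int.natAbs_eq n with he | he
      · rw [← zpow_natCast, ← he, h1]
      · rw [← zpow_natCast, ← neg_neg (n.natAbs : ℤ), ← he, zpow_neg, h1, inv_one]
    have := tf x.toMul n.natAbs (Int.natAbs_ne_zero.mpr hn) h2
    exact this
  haveI : Module.Free ℤ (Additive (K ⧸ bli.C t ht)) := Module.free_of_finite_type_torsion_free'
  -- extract a coordinate functional
  haveI : Nontrivial (Additive (K ⧸ bli.C t ht)) := ⟨Additive.ofMul (s₀ : K ⧸ bli.C t ht),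
    Additive.ofMul 1,
    fun h => hs₀C ((QuotientGroup.eq_one_iff s₀).mp (congrArg Additive.toMul h))⟩
  let b := Module.Free.chooseBasis ℤ (Additive (K ⧸ bli.C t ht))
  obtain ⟨i⟩ := b.index_nonempty
  let f : Additive (K ⧸ bli.C t ht) →ₗ[ℤ] ℤ := b.coord i
  have hf : Function.Surjective f := by
    intro z
    refine ⟨z • b i, ?_⟩
    rw [f.map_smul, Module.Basis.coord_apply, Module.Basis.repr_self, Finsupp.single_eq_same, smul_eq_mul,
      mul_one]
  let φfun : K → Multiplicative ℤ :=
    fun x => Multiplicative.ofAdd (f (Additive.ofMul ((x : K ⧸ bli.C t ht))))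
  refine ⟨MonoidHom.mk' φfun ?_, ?_⟩
  · intro x y
    show Multiplicative.ofAdd (f (Additive.ofMul (((x * y : K) : K ⧸ bli.C t ht)))) = _
    rw [QuotientGroup.mk_mul]
    rw [show Additive.ofMul ((x : K ⧸ bli.C t ht) * (y : K ⧸ bli.C t ht)) =
      Additive.ofMul (x : K ⧸ bli.C t ht) + Additive.ofMul (y : K ⧸ bli.C t ht) from rfl,
      map_add]
    rfl
  · intro z
    obtain ⟨x, hx⟩ := hf z.toAdd
    obtain ⟨g, hg⟩ := QuotientGroup.mk_surjective x.toMul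
    refine ⟨g, ?_⟩
    show Multiplicative.ofAdd (f (Additive.ofMul ((g : K ⧸ bli.C t ht)))) = z
    rw [hg]
    rw [show Additive.ofMul x.toMul = x from rfl, hx]
    rfl
end BiOrderedLocallyIndicable

/-- A group equipped with a bi-invariant linear order is locally indicable: every
nontrivial finitely generated subgroup admits a surjective homomorphism onto `ℤ`. -/
theorem biordered_locally_indicable {G : Type*} [Group G] [LinearOrder G]
    [MulLeftStrictMono G] [MulRightStrictMono G]
    (H : Subgroup G) (hfg : Group.FG H) (hne : H ≠ ⊥) :
    ∃ φ : H →* Multiplicative ℤ, Function.Surjective φ := by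
  haveI : Nontrivial H := (Subgroup.nontrivial_iff_ne_bot H).mpr hne
  haveI : MulLeftStrictMono ↥H := by
    constructor
    intro c a b h
    rw [← Subtype.coe_lt_coe] at h ⊢
    exact mul_lt_mul_right h (c : G)
  haveI : MulRightStrictMono ↥H := by
    constructor
    intro c a b h
    rw [← Subtype.coe_lt_coe] at h ⊢
    exact mul_lt_mul_left h (c : G)
  exact bli.main hfg
end

section
/- Let G be a nontrivial finitely generated group admitting a bi-invariant linear order. Then G is not a simple group. -/
set_option linter.unusedSectionVars false

namespace BiorderedAux

attribute [local instance] mulLeftMono_of_mulLeftStrictMono mulRightMono_of_mulRightStrictMono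

variable {G : Type*} [Group G] [LinearOrder G] [MulLeftStrictMono G] [MulRightStrictMono G]

theorem pow_le_pow_of_le {a b : G} (h : a ≤ b) : ∀ n : ℕ, a ^ n ≤ b ^ n := by
  intro n
  induction n with
  | zero => simp
  | succ k ih => rw [pow_succ, pow_succ]; exact mul_le_mul' ih h

theorem one_lt_pow_of_one_lt {a : G} (ha : 1 < a) {n : ℕ} (hn : n ≠ 0) : 1 < a ^ n := by
  induction n with
  | zero => simp at hn
  | succ k ih =>
    rcases Nat.eq_zero_or_pos k with rfl | hk
    · simpa using ha
    · rw [pow_succ]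
      calc (1 : G) < a ^ k := ih hk.ne'
        _ ≤ a ^ k * a := le_mul_of_one_le_right' ha.le

theorem one_le_zpow_of_nonneg {a : G} (ha : 1 ≤ a) {k : ℤ} (hk : 0 ≤ k) : 1 ≤ a ^ k := by
  lift k to ℕ using hk
  rw [zpow_natCast]
  calc (1 : G) = 1 ^ k := (one_pow k).symm
    _ ≤ a ^ k := pow_le_pow_of_le ha k

theorem one_lt_zpow_of_pos {a : G} (ha : 1 < a) {k : ℤ} (hk : 0 < k) : 1 < a ^ k := by
  lift k to ℕ using hk.le
  rw [zpow_natCast]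
  exact one_lt_pow_of_one_lt ha (by exact_mod_cast hk.ne')

theorem zpow_mono_right {a : G} (ha : 1 ≤ a) {m n : ℤ} (h : m ≤ n) : a ^ m ≤ a ^ n := by
  rw [show n = m + (n - m) by ring, zpow_add]
  exact le_mul_of_one_le_right' (one_le_zpow_of_nonneg ha (by omega))

theorem zpow_strict_mono_right {a : G} (ha : 1 < a) {m n : ℤ} (h : m < n) : a ^ m < a ^ n := by
  rw [show n = m + (n - m) by ring, zpow_add]
  exact lt_mul_of_one_lt_right' _ (one_lt_zpow_of_pos ha (by omega))

/-- existence of an integer "floor" exponent -/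
theorem exists_zpow_floor {δ : G} (hδ : 1 < δ)
    (harch : ∀ y : G, ∃ n : ℕ, y ≤ δ ^ n) (a : G) :
    ∃ p : ℤ, δ ^ p ≤ a ∧ a < δ ^ (p + 1) := by
  obtain ⟨n, hn⟩ := harch a
  obtain ⟨m, hm⟩ := harch a⁻¹
  have hn' : a ≤ δ ^ (n : ℤ) := by rwa [zpow_natCast]
  have hlow : δ ^ (-(m : ℤ)) ≤ a := by
    rw [zpow_neg, zpow_natCast]
    calc (δ ^ m)⁻¹ ≤ (a⁻¹)⁻¹ := inv_le_inv_iff.mpr hm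
      _ = a := inv_inv a
  obtain ⟨p, hp, hmax⟩ := Int.exists_greatest_of_bdd
    (P := fun k : ℤ => δ ^ k ≤ a)
    ⟨n, fun z hz => by
      by_contra hcon
      push_neg at hcon
      exact absurd (hz.trans hn') (not_le.mpr (zpow_strict_mono_right hδ hcon))⟩
    ⟨-(m : ℤ), hlow⟩
  refine ⟨p, hp, ?_⟩
  by_contra hcon
  push_neg at hcon
  exact absurd (hmax (p + 1) hcon) (by omega)

/-- Hölder-style: an "Archimedean" bi-ordered group is commutative. -/
theorem arch_comm (harch : ∀ x : G, 1 < x → ∀ y : G, ∃ n : ℕ, y ≤ x ^ n) :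
    ∀ a b : G, a * b = b * a := by
  have key : ∀ a b : G, 1 < (b * a)⁻¹ * (a * b) → False := by
    intro a b hc
    set c := (b * a)⁻¹ * (a * b) with hcdef
    by_cases hδ : ∃ δ : G, 1 < δ ∧ δ < c
    · obtain ⟨δ₀, h1, h2⟩ := hδ
      set δ := min δ₀ (δ₀⁻¹ * c) with hδdef
      have hδ1 : 1 < δ := by
        refine lt_min h1 ?_
        have := mul_lt_mul_right h2 δ₀⁻¹
        simpa using this
      have hδ2 : δ * δ ≤ c := by
        calc δ * δ ≤ δ₀ * (δ₀⁻¹ * c) := mul_le_mul' (min_le_left _ _) (min_le_right _ _)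
          _ = c := by group
      have harchδ : ∀ y : G, ∃ n : ℕ, y ≤ δ ^ n := fun y => harch δ hδ1 y
      obtain ⟨p, hp1, hp2⟩ := exists_zpow_floor hδ1 harchδ a
      obtain ⟨q, hq1, hq2⟩ := exists_zpow_floor hδ1 harchδ b
      have hup : a * b < δ ^ (p + q + 2) := by
        calc a * b < a * δ ^ (q + 1) := mul_lt_mul_right hq2 a
          _ < δ ^ (p + 1) * δ ^ (q + 1) := mul_lt_mul_left hp2 _
          _ = δ ^ (p + q + 2) := by rw [← zpow_add]; ring_nf
      have hdown : δ ^ (p + q) ≤ b * a := by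
        calc δ ^ (p + q) = δ ^ q * δ ^ p := by rw [← zpow_add]; ring_nf
          _ ≤ b * δ ^ p := mul_le_mul_left hq1 _
          _ ≤ b * a := mul_le_mul_right hp1 b
      have hlt : c < δ * δ := by
        calc c = (b * a)⁻¹ * (a * b) := hcdef
          _ < (b * a)⁻¹ * δ ^ (p + q + 2) := mul_lt_mul_right hup _
          _ ≤ (δ ^ (p + q))⁻¹ * δ ^ (p + q + 2) := mul_le_mul_left (inv_le_inv_iff.mpr hdown) _
          _ = δ ^ (2 : ℤ) := by rw [← zpow_neg, ← zpow_add]; ring_nf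
          _ = δ * δ := by rw [show (2 : ℤ) = 1 + 1 by norm_num, zpow_add, zpow_one]
      exact absurd (hlt.trans_le hδ2) (lt_irrefl c)
    · push_neg at hδ
      have hcyc : ∀ x : G, ∃ p : ℤ, x = c ^ p := by
        intro x
        obtain ⟨p, hp1, hp2⟩ := exists_zpow_floor hc (harch c hc) x
        refine ⟨p, ?_⟩
        by_contra hne'
        have h1 : 1 ≤ (c ^ p)⁻¹ * x := by
          have := mul_le_mul_right hp1 (c ^ p)⁻¹
          simpa using this
        have h2 : (c ^ p)⁻¹ * x < c := by
          have : x < c ^ p * c := by rwa [← zpow_add_one]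
          have := mul_lt_mul_right this (c ^ p)⁻¹
          simpa [mul_assoc] using this
        have h3 : (c ^ p)⁻¹ * x ≠ 1 := by
          intro h
          apply hne'
          have : c ^ p * ((c ^ p)⁻¹ * x) = c ^ p * 1 := by rw [h]
          simpa [mul_assoc] using this
        exact absurd h2 (not_lt.mpr (hδ _ (lt_of_le_of_ne h1 (Ne.symm h3))))
      obtain ⟨pa, hpa⟩ := hcyc a
      obtain ⟨pb, hpb⟩ := hcyc b
      have hcomm : a * b = b * a := by
        rw [hpa, hpb, ← zpow_add, ← zpow_add, add_comm]
      have : c = 1 := by rw [hcdef, hcomm]; group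
      rw [this] at hc
      exact lt_irrefl 1 hc
  intro a b
  by_contra hab
  have hne : (b * a)⁻¹ * (a * b) ≠ 1 := by
    intro h
    exact hab (by rw [inv_mul_eq_one] at h; exact h.symm)
  rcases hne.lt_or_gt with h | h
  · refine key b a ?_
    have : 1 < ((b * a)⁻¹ * (a * b))⁻¹ := one_lt_inv_of_inv h
    simpa [mul_inv_rev] using this
  · exact key a b h

end BiorderedAux

open BiorderedAux in
/-- A nontrivial finitely generated group admitting a bi-invariant linear order
is not simple. -/
theorem biordered_fg_not_simple {G : Type*} [Group G] [Nontrivial G] [LinearOrder G]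
    [MulLeftStrictMono G] [MulRightStrictMono G]
    (hfg : Group.FG G) : ¬ IsSimpleGroup G := by
  haveI := mulLeftMono_of_mulLeftStrictMono G
  haveI := mulRightMono_of_mulRightStrictMono G
  intro hs
  obtain ⟨S, hS⟩ := Group.fg_def.mp hfg
  set g : G := (insert (1 : G) (S.image mabs)).max' (Finset.insert_nonempty _ _) with hgdef
  have hg_mem : ∀ s ∈ S, mabs s ≤ g := fun s hs' =>
    Finset.le_max' _ _ (Finset.mem_insert_of_mem (Finset.mem_image_of_mem _ hs'))
  have hg_one : (1 : G) ≤ g := Finset.le_max' _ _ (Finset.mem_insert_self _ _)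
  -- every element is bounded by powers of g
  have hbound : ∀ x : G, ∃ n : ℕ, mabs x ≤ g ^ n := by
    let H : Subgroup G :=
      { carrier := {x : G | ∃ n : ℕ, mabs x ≤ g ^ n}
        one_mem' := ⟨0, by simp⟩
        inv_mem' := by
          rintro x ⟨n, hn⟩
          exact ⟨n, by rwa [mabs_inv]⟩
        mul_mem' := by
          rintro x y ⟨n, hn⟩ ⟨m, hm⟩
          refine ⟨n + m, ?_⟩
          rw [mabs_le']
          constructor
          · calc x * y ≤ mabs x * mabs y :=
                  mul_le_mul' (le_mabs_self x) (le_mabs_self y)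
              _ ≤ g ^ n * g ^ m := mul_le_mul' hn hm
              _ = g ^ (n + m) := (pow_add g n m).symm
          · rw [mul_inv_rev]
            calc y⁻¹ * x⁻¹ ≤ mabs y * mabs x :=
                  mul_le_mul' (inv_le_mabs y) (inv_le_mabs x)
              _ ≤ g ^ m * g ^ n := mul_le_mul' hm hn
              _ = g ^ (n + m) := by rw [← pow_add, Nat.add_comm] }
    have hle : (⊤ : Subgroup G) ≤ H := by
      rw [← hS, Subgroup.closure_le]
      intro s hs'
      exact ⟨1, by simpa using hg_mem s hs'⟩
    intro x
    exact hle (Subgroup.mem_top x)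
  have hg1 : 1 < g := by
    obtain ⟨x, hx⟩ := exists_ne (1 : G)
    rcases eq_or_lt_of_le hg_one with h | h
    · exfalso
      obtain ⟨n, hn⟩ := hbound x
      rw [← h, one_pow] at hn
      exact hx (mabs_le_one.mp hn)
    · exact h
  -- the subgroup of elements infinitesimal relative to g
  set C : Subgroup G :=
    { carrier := {x : G | ∀ n : ℕ, mabs x ^ n < g}
      one_mem' := by intro n; simpa using hg1
      inv_mem' := by
        intro x hx n
        rw [mabs_inv]
        exact hx n
      mul_mem' := by
        intro x y hx hy n
        set m := max (mabs x) (mabs y) with hmdef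
        have hxy : mabs (x * y) ≤ m * m := by
          rw [mabs_le']
          constructor
          · exact mul_le_mul' ((le_mabs_self x).trans (le_max_left _ _))
              ((le_mabs_self y).trans (le_max_right _ _))
          · rw [mul_inv_rev]
            exact mul_le_mul' ((inv_le_mabs y).trans (le_max_right _ _))
              ((inv_le_mabs x).trans (le_max_left _ _))
        have h2 : mabs (x * y) ^ n ≤ m ^ (2 * n) := by
          calc mabs (x * y) ^ n ≤ (m * m) ^ n := pow_le_pow_of_le hxy n
            _ = m ^ (2 * n) := by rw [← pow_two, ← pow_mul]
        rcases max_cases (mabs x) (mabs y) with ⟨hm, _⟩ | ⟨hm, _⟩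
        · calc mabs (x * y) ^ n ≤ m ^ (2 * n) := h2
            _ = mabs x ^ (2 * n) := by rw [hmdef, hm]
            _ < g := hx (2 * n)
        · calc mabs (x * y) ^ n ≤ m ^ (2 * n) := h2
            _ = mabs y ^ (2 * n) := by rw [hmdef, hm]
            _ < g := hy (2 * n) } with hCdef
  have hCnormal : C.Normal := by
    constructor
    intro x hx h
    intro n
    have hconj : mabs (h * x * h⁻¹) = h * mabs x * h⁻¹ := by
      have hinv : (h * x * h⁻¹)⁻¹ = h * x⁻¹ * h⁻¹ := by group
      rw [mabs_eq_max_inv, hinv, mabs_eq_max_inv, ← max_mul_mul_left, ← max_mul_mul_right]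
    have hpow : mabs (h * x * h⁻¹) ^ n = h * mabs x ^ n * h⁻¹ := by
      rw [hconj, conj_pow]
    rw [hpow]
    by_contra hcon
    push_neg at hcon
    set a := mabs x ^ n with hadef
    have ha : ∀ m : ℕ, a ^ m < g := fun m => by
      rw [hadef, ← pow_mul]; exact hx (n * m)
    set b := h⁻¹ * g * h with hbdef
    have hb_le : b ≤ a := by
      have h1 : h⁻¹ * g ≤ h⁻¹ * (h * a * h⁻¹) := mul_le_mul_right hcon h⁻¹
      have h2 : h⁻¹ * g * h ≤ h⁻¹ * (h * a * h⁻¹) * h := mul_le_mul_left h1 h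
      calc b = h⁻¹ * g * h := hbdef
        _ ≤ h⁻¹ * (h * a * h⁻¹) * h := h2
        _ = a := by group
    obtain ⟨k, hk⟩ := hbound h
    have hh1 : h ≤ g ^ k := (le_mabs_self h).trans hk
    have hh2 : h⁻¹ ≤ g ^ k := (inv_le_mabs h).trans hk
    have hgm : g ^ (2 * k + 1) = h * b ^ (2 * k + 1) * h⁻¹ := by
      rw [hbdef]
      rw [show h⁻¹ * g * h = h⁻¹ * g * (h⁻¹)⁻¹ by rw [inv_inv], conj_pow]
      group
    have hfinal : g ^ (2 * k + 1) < g ^ (2 * k + 1) := by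
      calc g ^ (2 * k + 1) = h * b ^ (2 * k + 1) * h⁻¹ := hgm
        _ ≤ h * a ^ (2 * k + 1) * h⁻¹ :=
            mul_le_mul_left (mul_le_mul_right (pow_le_pow_of_le hb_le _) h) h⁻¹
        _ < h * g * h⁻¹ :=
            mul_lt_mul_left (mul_lt_mul_right (ha _) h) h⁻¹
        _ ≤ g ^ k * g * g ^ k := mul_le_mul' (mul_le_mul_left hh1 g) hh2
        _ = g ^ (2 * k + 1) := by rw [← pow_succ, ← pow_add]; ring_nf
    exact absurd hfinal (lt_irrefl _)
  have hgC : g ∉ C := by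
    intro hgc
    have := hgc 1
    rw [pow_one, mabs_of_one_le hg1.le] at this
    exact absurd this (lt_irrefl g)
  rcases hs.eq_bot_or_eq_top_of_normal C hCnormal with hCbot | hCtop
  · -- Archimedean case
    have harch : ∀ x : G, 1 < x → ∀ y : G, ∃ n : ℕ, y ≤ x ^ n := by
      intro x hx y
      have hxC : x ∉ C := by
        rw [hCbot]
        simpa [Subgroup.mem_bot] using hx.ne'
      have hgx : ∃ n : ℕ, g ≤ x ^ n := by
        by_contra hcon
        push_neg at hcon
        exact hxC fun n => by rw [mabs_of_one_le hx.le]; exact hcon n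
      obtain ⟨n, hgxn⟩ := hgx
      obtain ⟨k, hk⟩ := hbound y
      refine ⟨n * k, ?_⟩
      calc y ≤ mabs y := le_mabs_self y
        _ ≤ g ^ k := hk
        _ ≤ (x ^ n) ^ k := pow_le_pow_of_le hgxn k
        _ = x ^ (n * k) := by rw [← pow_mul]
    have hcomm := arch_comm harch
    set A := Subgroup.zpowers (g * g) with hAdef
    have hAnormal : A.Normal := by
      constructor
      intro z hz h
      have : h * z * h⁻¹ = z := by rw [hcomm h z, mul_assoc, mul_inv_cancel, mul_one]
      rwa [this]
    rcases hs.eq_bot_or_eq_top_of_normal A hAnormal with hA | hA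
    · have hmem : g * g ∈ A := Subgroup.mem_zpowers _
      rw [hA, Subgroup.mem_bot] at hmem
      have h2 : 1 < g * g := by
        calc (1 : G) < g := hg1
          _ ≤ g * g := le_mul_of_one_le_right' hg1.le
      rw [hmem] at h2
      exact lt_irrefl 1 h2
    · have hgA : g ∈ A := by rw [hA]; trivial
      obtain ⟨k, hk⟩ := hgA
      have hgg : g * g = g ^ (2 : ℤ) := by
        rw [show (2 : ℤ) = 1 + 1 by norm_num, zpow_add, zpow_one]
      have h2k : g ^ (2 * k) = g := by
        rw [zpow_mul, ← hgg]
        simpa using hk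
      have hone : g ^ (2 * k - 1) = 1 := by
        rw [zpow_sub, h2k, zpow_one]
        group
      rcases lt_trichotomy (2 * k - 1) 0 with h | h | h
      · have := one_lt_zpow_of_pos hg1 (show (0 : ℤ) < -(2 * k - 1) by omega)
        rw [zpow_neg, hone, inv_one] at this
        exact lt_irrefl 1 this
      · omega
      · have := one_lt_zpow_of_pos hg1 h
        rw [hone] at this
        exact lt_irrefl 1 this
  · exact hgC (by rw [hCtop]; trivial)
end

section
/- Let G be a locally indicable group, i.e. every nontrivial finitely generated subgroup of G admits a surjective group homomorphism onto ℤ. Then G admits a left-invariant linear order: there exists a strict total order < on G such that for all a, b, c ∈ G, b < c implies a·b < a·c. -/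
lemma key_signs {G : Type*} [Group G]
    (hli : ∀ H : Subgroup G, Group.FG H → H ≠ ⊥ →
      ∃ φ : H →* Multiplicative ℤ, Function.Surjective φ)
    (S : Finset G) (hS : (1:G) ∉ S) :
    ∃ ε : G → Bool,
      (1:G) ∉ Subsemigroup.closure ((fun g => if ε g then g else g⁻¹) '' ↑S) := by
  induction S using Finset.strongInduction with
  | _ S IH =>
  rcases S.eq_empty_or_nonempty with rfl | ⟨g₀, hg₀⟩
  · exact ⟨fun _ => true, by simp [Subsemigroup.notMem_bot]⟩
  set H : Subgroup G := Subgroup.closure ↑S with hH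
  have hFG : Group.FG H := by
    rw [Group.fg_iff_subgroup_fg, Subgroup.fg_iff]
    exact ⟨↑S, rfl, S.finite_toSet⟩
  have hne : H ≠ ⊥ := by
    intro hbot
    have : g₀ ∈ H := Subgroup.subset_closure hg₀
    rw [hbot, Subgroup.mem_bot] at this
    exact hS (this ▸ hg₀)
  obtain ⟨φ, hφ⟩ := hli H hFG hne
  classical
  set ψ : G → ℤ := fun g => if h : g ∈ H then Multiplicative.toAdd (φ ⟨g, h⟩) else 0 with hψ
  have hψdef : ∀ (g : G) (h : g ∈ H), ψ g = Multiplicative.toAdd (φ ⟨g, h⟩) := by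
    intro g h; simp only [hψ, dif_pos h]
  have hψadd : ∀ x y, x ∈ H → y ∈ H → ψ (x * y) = ψ x + ψ y := by
    intro x y hx hy
    rw [hψdef x hx, hψdef y hy, hψdef (x*y) (mul_mem hx hy)]
    have : (⟨x * y, mul_mem hx hy⟩ : H) = ⟨x, hx⟩ * ⟨y, hy⟩ := rfl
    rw [this, map_mul]
    rfl
  have hψone : ψ 1 = 0 := by
    rw [hψdef 1 (one_mem H)]
    have : (⟨(1:G), one_mem H⟩ : H) = 1 := rfl
    rw [this, map_one]; rfl
  have hψinv : ∀ x, x ∈ H → ψ x⁻¹ = -ψ x := by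
    intro x hx
    have := hψadd x x⁻¹ hx (inv_mem hx)
    rw [mul_inv_cancel, hψone] at this
    linarith
  -- some generator has nonzero ψ
  have hex : ∃ g ∈ S, ψ g ≠ 0 := by
    by_contra hall
    push_neg at hall
    have hker : ∀ x ∈ Subgroup.closure (↑S : Set G), ψ x = 0 := by
      intro x hx
      induction hx using Subgroup.closure_induction with
      | mem z hz => exact hall z hz
      | one => exact hψone
      | mul a b ha hb iha ihb =>
          rw [hψadd a b ha hb, iha, ihb, add_zero]
      | inv a ha iha => rw [hψinv a ha, iha, neg_zero]
    obtain ⟨x, hx⟩ := hφ (Multiplicative.ofAdd 1)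
    have h1 : ψ ↑x = 0 := hker ↑x x.2
    rw [hψdef ↑x x.2] at h1
    have : (⟨(↑x : G), x.2⟩ : H) = x := rfl
    rw [this, hx] at h1
    simp at h1
  obtain ⟨g₁, hg₁S, hg₁⟩ := hex
  set S₀ : Finset G := S.filter (fun g => ψ g = 0) with hS₀
  have hssub : S₀ ⊂ S := by
    refine ⟨Finset.filter_subset _ _, fun hsub => ?_⟩
    have := hsub hg₁S
    rw [hS₀, Finset.mem_filter] at this
    exact hg₁ this.2
  obtain ⟨ε₀, hε₀⟩ := IH S₀ hssub (fun h => hS (Finset.filter_subset _ _ h))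
  set ε : G → Bool := fun g => if ψ g = 0 then ε₀ g else decide (0 < ψ g) with hε
  refine ⟨ε, fun hmem => ?_⟩
  set T₀ : Set G := (fun g => if ε₀ g then g else g⁻¹) '' ↑S₀ with hT₀
  have main : ∀ x ∈ Subsemigroup.closure ((fun g => if ε g then g else g⁻¹) '' ↑S),
      x ∈ H ∧ 0 ≤ ψ x ∧ (ψ x = 0 → x ∈ Subsemigroup.closure T₀) := by
    intro x hx
    induction hx using Subsemigroup.closure_induction with
    | mem z hz =>
        obtain ⟨g, hgS, rfl⟩ := hz
        have hgS' : g ∈ S := hgS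
        have hgH : g ∈ H := Subgroup.subset_closure hgS
        dsimp only
        by_cases h0 : ψ g = 0
        · have hεeq : ε g = ε₀ g := by simp only [hε]; rw [if_pos h0]
          rw [hεeq]
          refine ⟨?_, ?_, fun _ => Subsemigroup.subset_closure
            ⟨g, Finset.mem_coe.mpr (Finset.mem_filter.2 ⟨hgS', h0⟩), rfl⟩⟩
          · split
            · exact hgH
            · exact inv_mem hgH
          · split
            · simp [h0]
            · simp [hψinv g hgH, h0]
        · rcases lt_or_gt_of_ne h0 with hneg | hpos
          · have hεeq : ε g = false := by
              simp only [hε]; rw [if_neg h0]; simp [not_lt.2 hneg.le]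
            rw [hεeq]
            simp only [Bool.false_eq_true, if_false]
            exact ⟨inv_mem hgH, by rw [hψinv g hgH]; linarith,
              fun hc => by rw [hψinv g hgH] at hc; omega⟩
          · have hεeq : ε g = true := by
              simp only [hε]; rw [if_neg h0]; simp [hpos]
            rw [hεeq, if_pos rfl]
            exact ⟨hgH, hpos.le, fun hc => absurd hc h0⟩
    | mul a b ha hb iha ihb =>
        obtain ⟨haH, haψ, ha0⟩ := iha
        obtain ⟨hbH, hbψ, hb0⟩ := ihb
        refine ⟨mul_mem haH hbH, ?_, fun hc => ?_⟩
        · rw [hψadd a b haH hbH]; linarith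
        · rw [hψadd a b haH hbH] at hc
          exact mul_mem (ha0 (by linarith)) (hb0 (by linarith))
  obtain ⟨-, -, h0⟩ := main 1 hmem
  exact hε₀ (h0 hψone)

/-- A locally indicable group (every nontrivial finitely generated subgroup surjects
onto `ℤ`) admits a left-invariant linear order: a strict total order `r` such that
`r b c → r (a * b) (a * c)` for all `a b c`. -/
theorem locally_indicable_left_orderable {G : Type*} [Group G]
    (hli : ∀ H : Subgroup G, Group.FG H → H ≠ ⊥ →
      ∃ φ : H →* Multiplicative ℤ, Function.Surjective φ) :
    ∃ r : G → G → Prop, IsStrictTotalOrder G r ∧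
      ∀ a b c : G, r b c → r (a * b) (a * c) := by
  classical
  set C : Option (G ⊕ G × G) → Set (G → Bool) := fun i =>
    match i with
    | none => {P | P 1 = false}
    | some (Sum.inl g) => {P | g = 1 ∨ P g = true ∨ P g⁻¹ = true}
    | some (Sum.inr (g, h)) => {P | P g = true → P h = true → P (g * h) = true}
    with hC
  have hclosed : ∀ i, IsClosed (C i) := by
    rintro (_ | g | ⟨g, h⟩)
    · have : C none = (fun P : G → Bool => P 1) ⁻¹' {false} := rfl
      rw [this]
      exact (isClosed_discrete _).preimage (continuous_apply 1)
    · by_cases hg : g = 1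
      · have : C (some (Sum.inl g)) = Set.univ := by
          ext P; simp [hC, hg]
        rw [this]; exact isClosed_univ
      · have : C (some (Sum.inl g)) =
            (fun P : G → Bool => P g) ⁻¹' {true} ∪ (fun P : G → Bool => P g⁻¹) ⁻¹' {true} := by
          ext P; simp [hC, hg]
        rw [this]
        exact ((isClosed_discrete _).preimage (continuous_apply g)).union
          ((isClosed_discrete _).preimage (continuous_apply g⁻¹))
    · have : C (some (Sum.inr (g, h))) =
          (fun P : G → Bool => P g) ⁻¹' {false} ∪ ((fun P : G → Bool => P h) ⁻¹' {false} ∪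
            (fun P : G → Bool => P (g * h)) ⁻¹' {true}) := by
        ext P
        cases hPg : P g <;> cases hPh : P h <;> simp [hC, hPg, hPh]
      rw [this]
      exact ((isClosed_discrete _).preimage (continuous_apply g)).union
        (((isClosed_discrete _).preimage (continuous_apply h)).union
          ((isClosed_discrete _).preimage (continuous_apply (g * h))))
  have hne : (Set.univ ∩ ⋂ i, C i).Nonempty := by
    by_contra hcon
    rw [Set.not_nonempty_iff_eq_empty] at hcon
    obtain ⟨u, hu⟩ := isCompact_univ.elim_finite_subfamily_closed C hclosed hcon
    rw [Set.eq_empty_iff_forall_notMem] at hu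
    set E : Finset G := (u.biUnion fun i =>
      match i with
      | some (Sum.inl g) => {g}
      | _ => ∅).filter (· ≠ 1) with hE
    obtain ⟨ε, hε⟩ := key_signs hli E (by simp [hE])
    set T : Set G := (fun g => if ε g then g else g⁻¹) '' ↑E with hT
    set P : G → Bool := fun x => decide (x ∈ Subsemigroup.closure T) with hP
    have hPiff : ∀ x, P x = true ↔ x ∈ Subsemigroup.closure T := by
      intro x; simp [hP]
    refine hu P ⟨trivial, Set.mem_iInter₂.2 ?_⟩
    rintro (_ | g | ⟨g, h⟩) hi
    · show P 1 = false
      rw [← Bool.not_eq_true, hPiff]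
      exact hε
    · show g = 1 ∨ P g = true ∨ P g⁻¹ = true
      by_cases hg : g = 1
      · exact Or.inl hg
      · refine Or.inr ?_
        have hgE : g ∈ E := by
          rw [hE, Finset.mem_filter]
          refine ⟨Finset.mem_biUnion.2 ⟨some (Sum.inl g), hi, ?_⟩, hg⟩
          simp
        have hmem : (if ε g then g else g⁻¹) ∈ Subsemigroup.closure T :=
          Subsemigroup.subset_closure ⟨g, Finset.mem_coe.2 hgE, rfl⟩
        cases hεg : ε g
        · rw [hεg] at hmem
          simp only [Bool.false_eq_true, if_false] at hmem
          exact Or.inr ((hPiff _).2 hmem)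
        · rw [hεg, if_pos rfl] at hmem
          exact Or.inl ((hPiff _).2 hmem)
    · show P g = true → P h = true → P (g * h) = true
      intro hg hh
      rw [hPiff] at hg hh ⊢
      exact mul_mem hg hh
  obtain ⟨P, -, hPmem⟩ := hne
  rw [Set.mem_iInter] at hPmem
  have hone : P 1 = false := hPmem none
  have htot : ∀ g : G, g = 1 ∨ P g = true ∨ P g⁻¹ = true :=
    fun g => hPmem (some (Sum.inl g))
  have hmul : ∀ g h : G, P g = true → P h = true → P (g * h) = true :=
    fun g h => hPmem (some (Sum.inr (g, h)))
  refine ⟨fun a b => P (a⁻¹ * b) = true,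
    { trichotomous := ?_, irrefl := ?_, trans := ?_ }, ?_⟩
  · -- trichotomous
    intro a b
    rcases htot (a⁻¹ * b) with h | h | h
    · exact fun _ _ => inv_mul_eq_one.mp h
    · exact fun h1 _ => absurd h h1
    · refine fun _ h2 => absurd ?_ h2
      rwa [mul_inv_rev, inv_inv] at h
  · -- irrefl
    intro a h
    rw [inv_mul_cancel, hone] at h
    exact Bool.false_ne_true h
  · -- trans
    intro a b c hab hbc
    have := hmul _ _ hab hbc
    rwa [show a⁻¹ * b * (b⁻¹ * c) = a⁻¹ * c by group] at this
  · intro a b c h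
    rwa [show (a * b)⁻¹ * (a * c) = b⁻¹ * c by group]
end

section
/- The group presented on generators x₁, x₂, x₃, … (indexed by the positive integers) together with t and h, with defining relators t xᵢ t⁻¹ xᵢ⁻¹ and h xᵢ h⁻¹ x_{i+1}⁻¹ for all i ≥ 1, is isomorphic to the group presented on three generators a, t, h with defining relators the commutators [t, hⁱ a h⁻ⁱ] for all integers i ≥ 0 (the group ℤ • ℤ). -/
open scoped commutatorElement

/-- Generators of the first presentation: `Sum.inl i` is the generator `x_{i+1}`
(for `i : ℕ`, so that the generators are `x₁, x₂, …`), `Sum.inr false` is `t`,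
and `Sum.inr true` is `h`. -/
abbrev GoGGen : Type := ℕ ⊕ Bool

/-- Relators `t xᵢ t⁻¹ xᵢ⁻¹` and `h xᵢ h⁻¹ x_{i+1}⁻¹` for all `i ≥ 1`. -/
def GoGRels : Set (FreeGroup GoGGen) :=
  { r | (∃ i : ℕ, r = ⁅FreeGroup.of ((Sum.inr false : GoGGen)), FreeGroup.of ((Sum.inl i : GoGGen))⁆) ∨
        (∃ i : ℕ, r = FreeGroup.of ((Sum.inr true : GoGGen)) * FreeGroup.of ((Sum.inl i : GoGGen)) *
          (FreeGroup.of ((Sum.inr true : GoGGen)))⁻¹ * (FreeGroup.of ((Sum.inl (i + 1) : GoGGen)))⁻¹) }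

/-- Generators of the group `ℤ • ℤ`: `a`, `t`, `h`. -/
inductive ZbulZGen3 : Type
  | a : ZbulZGen3
  | t : ZbulZGen3
  | h : ZbulZGen3

/-- The defining relators of `ℤ • ℤ`: the commutators `⁅t, hⁱ a h⁻ⁱ⁆` for `i ≥ 0`. -/
def ZbulZRels3 : Set (FreeGroup ZbulZGen3) :=
  { r | ∃ i : ℕ, r = ⁅FreeGroup.of ZbulZGen3.t,
      (FreeGroup.of ZbulZGen3.h) ^ i * FreeGroup.of ZbulZGen3.a *
        ((FreeGroup.of ZbulZGen3.h) ^ i)⁻¹⁆ }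

namespace GoGAux

def fgen : GoGGen → PresentedGroup ZbulZRels3
  | Sum.inl i => (PresentedGroup.of ZbulZGen3.h) ^ i * PresentedGroup.of ZbulZGen3.a *
      ((PresentedGroup.of ZbulZGen3.h) ^ i)⁻¹
  | Sum.inr false => PresentedGroup.of ZbulZGen3.t
  | Sum.inr true => PresentedGroup.of ZbulZGen3.h

def ggen : ZbulZGen3 → PresentedGroup GoGRels
  | ZbulZGen3.a => PresentedGroup.of (Sum.inl 0)
  | ZbulZGen3.t => PresentedGroup.of (Sum.inr false)
  | ZbulZGen3.h => PresentedGroup.of (Sum.inr true)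

lemma rel_one {α : Type} {rels : Set (FreeGroup α)} {r : FreeGroup α} (h : r ∈ rels) :
    PresentedGroup.mk rels r = 1 :=
  (QuotientGroup.eq_one_iff _).mpr (Subgroup.subset_normalClosure h)

lemma mk_of {α : Type} {rels : Set (FreeGroup α)} (x : α) :
    PresentedGroup.mk rels (FreeGroup.of x) = PresentedGroup.of x := rfl

lemma zrel (i : ℕ) :
    (PresentedGroup.of ZbulZGen3.t : PresentedGroup ZbulZRels3) *
      ((PresentedGroup.of ZbulZGen3.h) ^ i * PresentedGroup.of ZbulZGen3.a *
        ((PresentedGroup.of ZbulZGen3.h) ^ i)⁻¹) =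
    ((PresentedGroup.of ZbulZGen3.h) ^ i * PresentedGroup.of ZbulZGen3.a *
        ((PresentedGroup.of ZbulZGen3.h) ^ i)⁻¹) * PresentedGroup.of ZbulZGen3.t := by
  have := rel_one (rels := ZbulZRels3) ⟨i, rfl⟩
  simp only [commutatorElement_def, map_mul, map_inv, map_pow, mk_of] at this
  rw [mul_inv_eq_one] at this
  exact mul_inv_eq_iff_eq_mul.mp this

lemma grel1 (i : ℕ) :
    (PresentedGroup.of (Sum.inr false) : PresentedGroup GoGRels) *
      PresentedGroup.of (Sum.inl i) =
    PresentedGroup.of (Sum.inl i) * PresentedGroup.of (Sum.inr false) := by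
  have := rel_one (rels := GoGRels) (Or.inl ⟨i, rfl⟩)
  simp only [commutatorElement_def, map_mul, map_inv, mk_of] at this
  rw [mul_inv_eq_one] at this
  exact mul_inv_eq_iff_eq_mul.mp this

lemma grel2 (i : ℕ) :
    (PresentedGroup.of (Sum.inr true) : PresentedGroup GoGRels) *
      PresentedGroup.of (Sum.inl i) * (PresentedGroup.of (Sum.inr true))⁻¹ =
      PresentedGroup.of (Sum.inl (i + 1)) := by
  have := rel_one (rels := GoGRels) (Or.inr ⟨i, rfl⟩)
  simp only [map_mul, map_inv, mk_of] at this
  rw [mul_inv_eq_one] at this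
  exact this

lemma hpow (i : ℕ) :
    ((PresentedGroup.of (Sum.inr true) : PresentedGroup GoGRels)) ^ i *
      PresentedGroup.of (Sum.inl 0) * ((PresentedGroup.of (Sum.inr true)) ^ i)⁻¹ =
      PresentedGroup.of (Sum.inl i) := by
  induction i with
  | zero => simp
  | succ n ih =>
    rw [← grel2 n, ← ih, pow_succ']
    group

lemma frels : ∀ r ∈ GoGRels, FreeGroup.lift fgen r = 1 := by
  rintro r (⟨i, rfl⟩ | ⟨i, rfl⟩)
  · simp only [commutatorElement_def, map_mul, map_inv, FreeGroup.lift_apply_of, fgen]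
    rw [zrel i]; group
  · simp only [map_mul, map_inv, FreeGroup.lift_apply_of, fgen]
    group

lemma grels : ∀ r ∈ ZbulZRels3, FreeGroup.lift ggen r = 1 := by
  rintro r ⟨i, rfl⟩
  simp only [commutatorElement_def, map_mul, map_inv, map_pow, FreeGroup.lift_apply_of, ggen]
  rw [hpow i, grel1 i]
  group

end GoGAux

/-- The group `⟨x₁, x₂, …, t, h ∣ t xᵢ t⁻¹ = xᵢ, h xᵢ h⁻¹ = x_{i+1} (i ≥ 1)⟩` is
isomorphic to `ℤ • ℤ = ⟨a, t, h ∣ [t, hⁱ a h⁻ⁱ] = 1 (i ≥ 0)⟩`. -/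
theorem graph_of_groups_presentation_iso_zbulz :
    Nonempty (PresentedGroup GoGRels ≃* PresentedGroup ZbulZRels3) := by
  let f := PresentedGroup.toGroup GoGAux.frels
  let g := PresentedGroup.toGroup GoGAux.grels
  refine ⟨MonoidHom.toMulEquiv f g ?_ ?_⟩
  · ext x
    rcases x with i | b
    · simp only [MonoidHom.comp_apply, MonoidHom.id_apply, f, g, PresentedGroup.toGroup.of,
        GoGAux.fgen, map_mul, map_inv, map_pow, GoGAux.ggen]
      exact GoGAux.hpow i
    · cases b <;>
        simp [f, g, PresentedGroup.toGroup.of, GoGAux.fgen, GoGAux.ggen]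
  · ext x
    cases x <;>
      simp [f, g, PresentedGroup.toGroup.of, GoGAux.fgen, GoGAux.ggen]
end

section
/- The group presented on five generators a₁, b₁, a₂, b₂, t with defining relators [a₁, b₁], [a₂, b₂], a₁a₂⁻¹, and t b₁ t⁻¹ b₂⁻¹ is isomorphic to the group presented on three generators a, b, t with defining relators [a, b] and [a, t b t⁻¹] (the group ℤ □ ℤ). -/
open scoped commutatorElement


/-- Relators of the graph-of-groups presentation of `ℤ □ ℤ`, on five generators
`a₁ = of 0`, `b₁ = of 1`, `a₂ = of 2`, `b₂ = of 3`, `t = of 4`: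
`[a₁,b₁]`, `[a₂,b₂]`, `a₁a₂⁻¹`, `t b₁ t⁻¹ b₂⁻¹`. -/
def SqRelsA : Set (FreeGroup (Fin 5)) :=
  { ⁅FreeGroup.of (0 : Fin 5), FreeGroup.of (1 : Fin 5)⁆,
    ⁅FreeGroup.of (2 : Fin 5), FreeGroup.of (3 : Fin 5)⁆,
    FreeGroup.of (0 : Fin 5) * (FreeGroup.of (2 : Fin 5))⁻¹,
    FreeGroup.of (4 : Fin 5) * FreeGroup.of (1 : Fin 5) * (FreeGroup.of (4 : Fin 5))⁻¹ * (FreeGroup.of (3 : Fin 5))⁻¹ }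

/-- Generators of `ℤ □ ℤ`: `a`, `b`, `t`. -/
inductive SqGen : Type
  | a : SqGen
  | b : SqGen
  | t : SqGen

/-- The defining relators of `ℤ □ ℤ`: `[a, b]` and `[a, t b t⁻¹]`. -/
def SqRelsB : Set (FreeGroup SqGen) :=
  { ⁅FreeGroup.of SqGen.a, FreeGroup.of SqGen.b⁆,
    ⁅FreeGroup.of SqGen.a,
      FreeGroup.of SqGen.t * FreeGroup.of SqGen.b * (FreeGroup.of SqGen.t)⁻¹⁆ }

lemma rel_one {α : Type*} {rels : Set (FreeGroup α)} {r : FreeGroup α} (h : r ∈ rels) :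
    PresentedGroup.mk rels r = 1 :=
  (QuotientGroup.eq_one_iff r).2 (Subgroup.subset_normalClosure h)

def fA : Fin 5 → PresentedGroup SqRelsB
  | 0 => .of SqGen.a
  | 1 => .of SqGen.b
  | 2 => .of SqGen.a
  | 3 => .of SqGen.t * .of SqGen.b * (.of SqGen.t : PresentedGroup SqRelsB)⁻¹
  | 4 => .of SqGen.t

def fB : SqGen → PresentedGroup SqRelsA
  | .a => .of 0
  | .b => .of 1
  | .t => .of 4

lemma relB1 : ⁅(PresentedGroup.of SqGen.a : PresentedGroup SqRelsB), (PresentedGroup.of SqGen.b : PresentedGroup SqRelsB)⁆ = 1 := by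
  have := rel_one (rels := SqRelsB) (Or.inl rfl)
  simpa [commutatorElement_def, PresentedGroup.of] using this

lemma relB2 : ⁅(PresentedGroup.of SqGen.a : PresentedGroup SqRelsB),
    PresentedGroup.of SqGen.t * PresentedGroup.of SqGen.b * (PresentedGroup.of SqGen.t : PresentedGroup SqRelsB)⁻¹⁆ = 1 := by
  have := rel_one (rels := SqRelsB) (Or.inr rfl)
  simpa [commutatorElement_def, PresentedGroup.of] using this

lemma hA : ∀ r ∈ SqRelsA, FreeGroup.lift fA r = 1 := by
  have h1 := relB1
  have h2 := relB2
  simp only [commutatorElement_def] at h1 h2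
  rintro r (rfl | rfl | rfl | rfl) <;>
    simp only [commutatorElement_def, map_mul, map_inv, FreeGroup.lift_apply_of, fA]
  · exact h1
  · convert h2 using 2
  · group
  · group

lemma relA1 : ⁅(PresentedGroup.of 0 : PresentedGroup SqRelsA), (PresentedGroup.of 1 : PresentedGroup SqRelsA)⁆ = 1 := by
  have := rel_one (rels := SqRelsA) (Or.inl rfl)
  simpa [commutatorElement_def, PresentedGroup.of] using this

lemma relA2 : ⁅(PresentedGroup.of 2 : PresentedGroup SqRelsA), (PresentedGroup.of 3 : PresentedGroup SqRelsA)⁆ = 1 := by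
  have := rel_one (rels := SqRelsA) (Or.inr (Or.inl rfl))
  simpa [commutatorElement_def, PresentedGroup.of] using this

lemma relA3 : (PresentedGroup.of 0 : PresentedGroup SqRelsA) = .of 2 := by
  have := rel_one (rels := SqRelsA) (Or.inr (Or.inr (Or.inl rfl)))
  simp only [map_mul, map_inv] at this
  group at this
  exact eq_of_div_eq_one (by simpa [div_eq_mul_inv, PresentedGroup.of] using this)

lemma relA4 : (PresentedGroup.of 4 : PresentedGroup SqRelsA) * PresentedGroup.of 1 * (PresentedGroup.of 4 : PresentedGroup SqRelsA)⁻¹ = .of 3 := by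
  have := rel_one (rels := SqRelsA) (Or.inr (Or.inr (Or.inr rfl)))
  simp only [map_mul, map_inv] at this
  exact eq_of_div_eq_one (by simpa [div_eq_mul_inv, mul_assoc, PresentedGroup.of] using this)

lemma hB : ∀ r ∈ SqRelsB, FreeGroup.lift fB r = 1 := by
  rintro r (rfl | rfl) <;>
    simp only [commutatorElement_def, map_mul, map_inv, FreeGroup.lift_apply_of, fB]
  · have := relA1; simpa [commutatorElement_def] using this
  · have h2 := relA2
    rw [relA3, relA4]
    simpa [commutatorElement_def] using h2

/-- The group `⟨a₁, b₁, a₂, b₂, t ∣ [a₁,b₁], [a₂,b₂], a₁ = a₂, t b₁ t⁻¹ = b₂⟩` is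
isomorphic to `ℤ □ ℤ = ⟨a, b, t ∣ [a,b] = [a, tbt⁻¹] = 1⟩`. -/
theorem square_product_presentation_simplification :
    Nonempty (PresentedGroup SqRelsA ≃* PresentedGroup SqRelsB) := by
  refine ⟨MonoidHom.toMulEquiv (PresentedGroup.toGroup hA) (PresentedGroup.toGroup hB) ?_ ?_⟩
  · ext x
    fin_cases x <;>
      simp only [MonoidHom.comp_apply, MonoidHom.id_apply, PresentedGroup.toGroup.of, fA, fB,
        map_mul, map_inv]
    · rfl
    · rfl
    · exact relA3
    · exact relA4
    · rfl
  · ext x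
    cases x <;>
      simp [fA, fB, PresentedGroup.toGroup.of]
end

section
/- Let X be a connected median graph on a vertex set V. Then there exist an index type ι and a map f : V → ℓ²(ι, ℝ) such that for all vertices x, y one has ‖f(x) − f(y)‖² = d(x, y), where d is the graph distance. In particular, X admits a Lipschitz embedding into a Hilbert space with compression exponent 1/2, so the Hilbert space compression of a median graph is at least 1/2. -/
/-- A connected graph is median if every triple of vertices admits a unique median
point, i.e. a vertex lying on geodesics between each pair of the triple. -/
def IsMedianGraph {V : Type u} (X : SimpleGraph V) : Prop :=
  X.Connected ∧ ∀ x₁ x₂ x₃ : V, ∃! m : V,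
    X.dist x₁ x₂ = X.dist x₁ m + X.dist m x₂ ∧
    X.dist x₁ x₃ = X.dist x₁ m + X.dist m x₃ ∧
    X.dist x₂ x₃ = X.dist x₂ m + X.dist m x₃

namespace MedianCompression

open SimpleGraph
open scoped ENNReal

variable {V : Type u} {X : SimpleGraph V}

/-- Convexity with respect to metric intervals. -/
def Cvx (X : SimpleGraph V) (A : Set V) : Prop :=
  ∀ x y z : V, x ∈ A → y ∈ A → X.dist x y = X.dist x z + X.dist z y → z ∈ A

/-- The (strict) halfspace determined by an ordered edge. -/
def W (X : SimpleGraph V) (a b : V) : Set V := {z | X.dist z a < X.dist z b}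

/-- A halfspace: a convex set with convex complement, with a crossing edge. -/
def IsHalf (X : SimpleGraph V) (A : Set V) : Prop :=
  Cvx X A ∧ Cvx X Aᶜ ∧ ∃ a b : V, X.dist a b = 1 ∧ a ∈ A ∧ b ∉ A

lemma mem_W {a b z : V} : z ∈ W X a b ↔ X.dist z a < X.dist z b := Iff.rfl

section Median

variable (hX : IsMedianGraph X)
include hX

lemma med_ex (x y z : V) : ∃ m : V,
    X.dist x y = X.dist x m + X.dist m y ∧
    X.dist x z = X.dist x m + X.dist m z ∧
    X.dist y z = X.dist y m + X.dist m z :=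
  (hX.2 x y z).exists

lemma med_uniq {x y z m m' : V}
    (h1 : X.dist x y = X.dist x m + X.dist m y)
    (h2 : X.dist x z = X.dist x m + X.dist m z)
    (h3 : X.dist y z = X.dist y m + X.dist m z)
    (h1' : X.dist x y = X.dist x m' + X.dist m' y)
    (h2' : X.dist x z = X.dist x m' + X.dist m' z)
    (h3' : X.dist y z = X.dist y m' + X.dist m' z) : m = m' := by
  obtain ⟨n, _, hu⟩ := hX.2 x y z
  rw [hu m ⟨h1, h2, h3⟩, hu m' ⟨h1', h2', h3'⟩]

lemma eq_of_dist_zero {x y : V} (h : X.dist x y = 0) : x = y :=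
  (hX.1.dist_eq_zero_iff).mp h

/-- In a median graph, no vertex is equidistant from the two endpoints of an edge. -/
lemma no_tie {a b : V} (hab : X.dist a b = 1) (z : V) : X.dist z a ≠ X.dist z b := by
  intro hz
  obtain ⟨m, h1, h2, h3⟩ := med_ex hX z a b
  have h0 : X.dist a m = 0 ∨ X.dist m b = 0 := by omega
  rcases h0 with h0 | h0
  · have e : a = m := eq_of_dist_zero hX h0
    rw [← e] at h2
    omega
  · have e : m = b := eq_of_dist_zero hX h0
    rw [e] at h1
    have hba : X.dist b a = 1 := by rw [X.dist_comm]; exact hab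
    omega

lemma one_apart {a b : V} (hab : X.dist a b = 1) (z : V) :
    X.dist z a + 1 = X.dist z b ∨ X.dist z b + 1 = X.dist z a := by
  have t1 := hX.1.dist_triangle (u := z) (v := a) (w := b)
  have t2 := hX.1.dist_triangle (u := z) (v := b) (w := a)
  have hba : X.dist b a = 1 := by rw [X.dist_comm]; exact hab
  have := no_tie hX hab z
  omega

/-- Key lemma: halfspaces `W a b` of a median graph are convex.
Proved by strong induction on `dist w a`. -/
lemma W_cvx_aux {a b : V} (hab : X.dist a b = 1) :
    ∀ n : ℕ, ∀ u v w : V, X.dist w a ≤ n → u ∈ W X a b → v ∈ W X a b →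
      X.dist u v = X.dist u w + X.dist w v → w ∈ W X a b := by
  intro n
  induction n with
  | zero =>
    intro u v w hwa _ _ _
    have : w = a := eq_of_dist_zero hX (Nat.le_zero.mp hwa)
    subst this
    simp only [W, Set.mem_setOf_eq, SimpleGraph.dist_self]
    omega
  | succ n IH =>
    intro u v w hwa hu hv hbtw
    by_contra hw
    simp only [W, Set.mem_setOf_eq] at hu hv hw
    have hwab : X.dist w a = X.dist w b + 1 := by
      rcases one_apart hX hab w with h | h <;> omega
    have huab : X.dist u b = X.dist u a + 1 := by
      rcases one_apart hX hab u with h | h <;> omega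
    have hvab : X.dist v b = X.dist v a + 1 := by
      rcases one_apart hX hab v with h | h <;> omega
    -- Step 1: we may assume `w` lies between `x` and `b` for `x = u, v`.
    have side : ∀ x y : V, X.dist x a < X.dist x b → X.dist y a < X.dist y b →
        X.dist x y = X.dist x w + X.dist w y → X.dist x b = X.dist x w + X.dist w b := by
      intro x y hx hy hxy
      obtain ⟨p, p1, p2, p3⟩ := med_ex hX x w b
      have hpw : X.dist p w = X.dist w p := X.dist_comm
      have tpa : X.dist w a ≤ X.dist w p + X.dist p a := hX.1.dist_triangle
      have tpb : X.dist p a ≤ X.dist p b + X.dist b a := hX.1.dist_triangle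
      have hba : X.dist b a = 1 := by rw [X.dist_comm]; exact hab
      rcases Nat.eq_zero_or_pos (X.dist p w) with hp0 | hp0
      · have : p = w := eq_of_dist_zero hX hp0
        subst this
        omega
      · exfalso
        have hbtwp : X.dist x y = X.dist x p + X.dist p y := by
          have t1 : X.dist x y ≤ X.dist x p + X.dist p y := hX.1.dist_triangle
          have t2 : X.dist p y ≤ X.dist p w + X.dist w y := hX.1.dist_triangle
          omega
        have hple : X.dist p a ≤ n := by omega
        have := IH x y p hple hx hy hbtwp
        simp only [W, Set.mem_setOf_eq] at this
        omega
    have hub : X.dist u b = X.dist u w + X.dist w b := side u v hu hv hbtw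
    have hvb : X.dist v b = X.dist v w + X.dist w b := by
      refine side v u hv hu ?_
      have c1 : X.dist u v = X.dist v u := X.dist_comm
      have c2 : X.dist u w = X.dist w u := X.dist_comm
      have c3 : X.dist w v = X.dist v w := X.dist_comm
      omega
    -- Step 2: replace `u`, `v` by neighbours `m₁`, `m₂` of `w` inside the halfspace.
    have mk : ∀ x : V, X.dist x a < X.dist x b → X.dist x b = X.dist x a + 1 →
        X.dist x b = X.dist x w + X.dist w b →
        ∃ m : V, X.dist m w = 1 ∧ X.dist x w = X.dist x m + 1 ∧
          X.dist m a + 1 = X.dist w a ∧ X.dist m b = X.dist w b + 1 := by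
      intro x hx hx1 hx2
      obtain ⟨m, e1, e2, e3⟩ := med_ex hX x w a
      have c1 : X.dist w m = X.dist m w := X.dist_comm
      have hmw : X.dist m w = 1 := by omega
      have t1 : X.dist x b ≤ X.dist x m + X.dist m b := hX.1.dist_triangle
      have t2 : X.dist m b ≤ X.dist m w + X.dist w b := hX.1.dist_triangle
      exact ⟨m, hmw, by omega, by omega, by omega⟩
    obtain ⟨m₁, hm₁w, hum₁, hm₁a, hm₁b⟩ := mk u hu huab hub
    obtain ⟨m₂, hm₂w, hvm₂, hm₂a, hm₂b⟩ := mk v hv hvab hvb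
    -- `d m₁ m₂ = 2`
    have hm₁m₂ : X.dist m₁ m₂ = 2 := by
      have t : X.dist m₁ m₂ ≤ X.dist m₁ w + X.dist w m₂ := hX.1.dist_triangle
      have c1 : X.dist w m₂ = X.dist m₂ w := X.dist_comm
      have h0 : X.dist m₁ m₂ ≠ 0 := by
        intro h0
        have : m₁ = m₂ := eq_of_dist_zero hX h0
        subst this
        have t1 : X.dist u v ≤ X.dist u m₁ + X.dist m₁ v := hX.1.dist_triangle
        have c2 : X.dist m₁ v = X.dist v m₁ := X.dist_comm
        have c3 : X.dist w v = X.dist v w := X.dist_comm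
        omega
      have h1 : X.dist m₁ m₂ ≠ 1 := by
        intro h1
        have := no_tie hX h1 a
        have c2 : X.dist a m₁ = X.dist m₁ a := X.dist_comm
        have c3 : X.dist a m₂ = X.dist m₂ a := X.dist_comm
        omega
      omega
    have hwbpos : 1 ≤ X.dist w b := by
      by_contra h
      have h0 : X.dist w b = 0 := by omega
      have e1 : m₁ = a := eq_of_dist_zero hX (by omega)
      have e2 : m₂ = a := eq_of_dist_zero hX (by omega)
      subst e1; subst e2
      simp [SimpleGraph.dist_self] at hm₁m₂
    -- Step 3: the median `s` of `m₁ m₂ a`.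
    obtain ⟨s, f1, f2, f3⟩ := med_ex hX m₁ m₂ a
    have csm : X.dist s m₂ = X.dist m₂ s := X.dist_comm
    have hm₁s : X.dist m₁ s = 1 := by omega
    have hm₂s : X.dist m₂ s = 1 := by omega
    have hsa : X.dist s a + 1 = X.dist w b := by omega
    by_cases hs : X.dist s a < X.dist s b
    · -- `s ∈ W`; produce the contradiction via uniqueness of the median of `m₁ m₂ t`.
      have hsb : X.dist s b = X.dist s a + 1 := by
        rcases one_apart hX hab s with h | h <;> omega
      have hsw : X.dist s w = 2 := by
        have t : X.dist s w ≤ X.dist s m₁ + X.dist m₁ w := hX.1.dist_triangle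
        have c1 : X.dist s m₁ = X.dist m₁ s := X.dist_comm
        have h0 : X.dist s w ≠ 0 := by
          intro h0
          have : s = w := eq_of_dist_zero hX h0
          subst this
          omega
        have h1 : X.dist s w ≠ 1 := by
          intro h1
          rcases one_apart hX h1 a with h | h <;>
          · have c2 : X.dist a s = X.dist s a := X.dist_comm
            have c3 : X.dist a w = X.dist w a := X.dist_comm
            omega
        omega
      obtain ⟨t, g1, g2, g3⟩ := med_ex hX s w b
      have ctw : X.dist w t = X.dist t w := X.dist_comm
      have hst : X.dist s t = 1 := by omega
      have htw : X.dist t w = 1 := by omega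
      have htb : X.dist t b + 1 = X.dist w b := by omega
      have hmt : ∀ m : V, X.dist m w = 1 → X.dist m b = X.dist w b + 1 →
          X.dist m t = 2 := by
        intro m hmw hmb
        have tr : X.dist m t ≤ X.dist m w + X.dist w t := hX.1.dist_triangle
        have h0 : X.dist m t ≠ 0 := by
          intro h0
          have : m = t := eq_of_dist_zero hX h0
          subst this
          omega
        have h1 : X.dist m t ≠ 1 := by
          intro h1
          rcases one_apart hX h1 b with h | h <;>
          · have c2 : X.dist b m = X.dist m b := X.dist_comm
            have c3 : X.dist b t = X.dist t b := X.dist_comm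
            omega
        omega
      have hm₁t : X.dist m₁ t = 2 := hmt m₁ hm₁w hm₁b
      have hm₂t : X.dist m₂ t = 2 := hmt m₂ hm₂w hm₂b
      have cwm₂ : X.dist w m₂ = X.dist m₂ w := X.dist_comm
      have cwt' : X.dist w t = X.dist t w := X.dist_comm
      have hws : w = s := by
        refine med_uniq hX (x := m₁) (y := m₂) (z := t)
          (by omega) (by omega) ?_ (by omega) (by omega) ?_
        · have c : X.dist m₂ w = X.dist w m₂ := X.dist_comm
          have c2 : X.dist w t = X.dist t w := X.dist_comm
          omega
        · have c : X.dist m₂ s = X.dist s m₂ := X.dist_comm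
          have c2 : X.dist s t = X.dist s t := rfl
          omega
      subst hws
      omega
    · -- `s ∉ W`: recurse.
      have hsb : X.dist s b + 1 = X.dist s a := by
        rcases one_apart hX hab s with h | h <;> omega
      have hsle : X.dist s a ≤ n := by omega
      have := IH m₁ m₂ s hsle (by simp only [W, Set.mem_setOf_eq]; omega)
        (by simp only [W, Set.mem_setOf_eq]; omega) (by omega)
      simp only [W, Set.mem_setOf_eq] at this
      omega

lemma W_cvx {a b : V} (hab : X.dist a b = 1) : Cvx X (W X a b) :=
  fun x y z hx hy hz => W_cvx_aux hX hab (X.dist z a) x y z le_rfl hx hy hz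

lemma W_compl {a b : V} (hab : X.dist a b = 1) : (W X a b)ᶜ = W X b a := by
  ext z
  simp only [W, Set.mem_compl_iff, Set.mem_setOf_eq, not_lt]
  rcases one_apart hX hab z with h | h <;> omega

lemma W_isHalf {a b : V} (hab : X.dist a b = 1) : IsHalf X (W X a b) := by
  refine ⟨W_cvx hX hab, ?_, a, b, hab, ?_, ?_⟩
  · rw [W_compl hX hab]
    exact W_cvx hX (by rw [X.dist_comm]; exact hab)
  · simp only [W, Set.mem_setOf_eq, SimpleGraph.dist_self, hab]
    omega
  · simp only [W, Set.mem_setOf_eq, SimpleGraph.dist_self, not_lt]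
    have : X.dist b a = 1 := by rw [X.dist_comm]; exact hab
    omega

/-- A halfspace containing `a` but not `b`, for an edge `ab`, is `W a b`. -/
lemma half_eq_W {A : Set V} (hA : IsHalf X A) {a b : V} (hab : X.dist a b = 1)
    (ha : a ∈ A) (hb : b ∉ A) : A = W X a b := by
  ext z
  simp only [W, Set.mem_setOf_eq]
  constructor
  · intro hz
    by_contra h
    have hz1 : X.dist z b + 1 = X.dist z a := by
      rcases one_apart hX hab z with h' | h' <;> omega
    have hba : X.dist b a = 1 := by rw [X.dist_comm]; exact hab
    exact hb (hA.1 z a b hz ha (by omega))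
  · intro hz
    by_contra h
    have h1 : X.dist z a + 1 = X.dist z b := by
      rcases one_apart hX hab z with h' | h' <;> omega
    have : a ∈ Aᶜ := hA.2.1 z b a h hb (by omega)
    exact this ha
end Median

section Walks

variable (hc : X.Connected)
include hc

lemma dist_start_getVert : ∀ {x y : V} (p : X.Walk x y) (i : ℕ),
    X.dist x (p.getVert i) ≤ i := by
  intro x y p
  induction p with
  | nil => intro i; simp [SimpleGraph.Walk.getVert, SimpleGraph.dist_self]
  | @cons x' y' z' h q ih =>
    intro i
    cases i with
    | zero => simp [SimpleGraph.Walk.getVert_zero, SimpleGraph.dist_self]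
    | succ i =>
      have h1 : X.dist x' y' = 1 := SimpleGraph.dist_eq_one_iff_adj.mpr h
      have t : X.dist x' ((SimpleGraph.Walk.cons h q).getVert (i + 1)) ≤
          X.dist x' y' + X.dist y' (q.getVert i) := by
        rw [SimpleGraph.Walk.getVert_cons_succ]
        exact hc.dist_triangle
      have := ih i
      omega

lemma dist_getVert_end : ∀ {x y : V} (p : X.Walk x y) (i : ℕ),
    X.dist (p.getVert i) y ≤ p.length - i := by
  intro x y p
  induction p with
  | nil => intro i; simp [SimpleGraph.Walk.getVert, SimpleGraph.dist_self]
  | @cons x' y' z' h q ih =>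
    intro i
    cases i with
    | zero =>
      simpa [SimpleGraph.Walk.getVert_zero] using
        SimpleGraph.dist_le (SimpleGraph.Walk.cons h q)
    | succ i =>
      rw [SimpleGraph.Walk.getVert_cons_succ]
      have := ih i
      simpa [SimpleGraph.Walk.length_cons] using this

end Walks

section Counting

variable (hX : IsMedianGraph X)
include hX

/-- The halfspaces separating `x` from `y` are in bijection with `Fin (dist x y)`. -/
lemma counting (x y : V) : ∃ g : Fin (X.dist x y) → Set V,
    (∀ i, IsHalf X (g i) ∧ x ∈ g i ∧ y ∉ g i) ∧ Function.Injective g ∧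
    ∀ A : Set V, IsHalf X A → x ∈ A → y ∉ A → ∃ i, A = g i := by
  classical
  have hc := hX.1
  obtain ⟨p, hp⟩ := hc.exists_walk_length_eq_dist x y
  set n := X.dist x y with hn
  -- distances along the geodesic
  have hda : ∀ i, i ≤ n → X.dist x (p.getVert i) = i ∧ X.dist (p.getVert i) y = n - i := by
    intro i hi
    have h1 := dist_start_getVert hc p i
    have h2 := dist_getVert_end hc p i
    rw [hp] at h2
    have h3 : n ≤ X.dist x (p.getVert i) + X.dist (p.getVert i) y := hc.dist_triangle
    omega
  have hdij : ∀ i j, i ≤ j → j ≤ n → X.dist (p.getVert i) (p.getVert j) = j - i := by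
    intro i j hij hj
    have hub : ∀ k, i ≤ k → k ≤ n → X.dist (p.getVert i) (p.getVert k) ≤ k - i := by
      intro k
      induction k with
      | zero => intro h1 _; have : i = 0 := by omega
                subst this; simp [SimpleGraph.dist_self]
      | succ k ihk =>
        intro h1 h2
        rcases Nat.lt_or_ge i (k+1) with h3 | h3
        · have hik : i ≤ k := by omega
          have he : X.Adj (p.getVert k) (p.getVert (k+1)) := by
            apply SimpleGraph.Walk.adj_getVert_succ
            omega
          have h4 : X.dist (p.getVert k) (p.getVert (k+1)) = 1 :=
            SimpleGraph.dist_eq_one_iff_adj.mpr he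
          have t : X.dist (p.getVert i) (p.getVert (k+1)) ≤
              X.dist (p.getVert i) (p.getVert k) + X.dist (p.getVert k) (p.getVert (k+1)) :=
            hc.dist_triangle
          have := ihk hik (by omega)
          omega
        · have : i = k + 1 := by omega
          subst this; simp [SimpleGraph.dist_self]
      -- end
    have hlb : n ≤ X.dist x (p.getVert i) + (X.dist (p.getVert i) (p.getVert j) +
        X.dist (p.getVert j) y) := by
      have t1 : n = X.dist x y := hn
      have t2 : X.dist x y ≤ X.dist x (p.getVert i) + X.dist (p.getVert i) y :=
        hc.dist_triangle
      have t3 : X.dist (p.getVert i) y ≤ X.dist (p.getVert i) (p.getVert j) +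
          X.dist (p.getVert j) y := hc.dist_triangle
      omega
    have h1 := (hda i (by omega)).1
    have h2 := (hda j hj).2
    have := hub j hij hj
    omega
  have hadj : ∀ i : Fin n, X.dist (p.getVert i) (p.getVert (i+1)) = 1 := by
    intro i
    exact SimpleGraph.dist_eq_one_iff_adj.mpr (SimpleGraph.Walk.adj_getVert_succ p (by omega))
  refine ⟨fun i => W X (p.getVert i) (p.getVert (i+1)), ?_, ?_, ?_⟩
  · intro i
    refine ⟨W_isHalf hX (hadj i), ?_, ?_⟩
    · simp only [mem_W]
      have h1 := (hda i (by omega)).1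
      have h2 := (hda (i+1) (by omega)).1
      omega
    · simp only [mem_W, not_lt]
      have h1 := (hda i (by omega)).2
      have h2 := (hda (i+1) (by omega)).2
      have c1 : X.dist y (p.getVert i) = X.dist (p.getVert i) y := X.dist_comm
      have c2 : X.dist y (p.getVert (i+1)) = X.dist (p.getVert (i+1)) y := X.dist_comm
      omega
  · have hlt : ∀ i j : Fin n, (i : ℕ) < j →
        W X (p.getVert i) (p.getVert (i+1)) ≠ W X (p.getVert j) (p.getVert (j+1)) := by
      intro i j hij heq
      have hmem : p.getVert (i+1) ∈ W X (p.getVert j) (p.getVert (j+1)) := by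
        simp only [mem_W]
        have h1 := hdij (i+1) j (by omega) (by omega)
        have h2 := hdij (i+1) (j+1) (by omega) (by omega)
        omega
      rw [← heq] at hmem
      simp only [mem_W] at hmem
      have h3 := hdij i (i+1) (by omega) (by omega)
      have c1 : X.dist (p.getVert (i+1)) (p.getVert i) =
          X.dist (p.getVert i) (p.getVert (i+1)) := X.dist_comm
      have h4 : X.dist (p.getVert (i+1)) (p.getVert (i+1)) = 0 := SimpleGraph.dist_self
      omega
    intro i j hij
    by_contra hne
    rcases lt_trichotomy (i : ℕ) (j : ℕ) with h | h | h
    · exact hlt i j h hij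
    · exact hne (Fin.ext h)
    · exact hlt j i h hij.symm
  · intro A hA hxA hyA
    have cross : ∀ (P : ℕ → Prop) (k : ℕ), P 0 → ¬ P k → ∃ i, i < k ∧ P i ∧ ¬ P (i+1) := by
      intro P k
      induction k with
      | zero => intro h0 hk; exact absurd h0 hk
      | succ k ihk =>
        intro h0 hk
        by_cases h : P k
        · exact ⟨k, by omega, h, hk⟩
        · obtain ⟨i, hi1, hi2, hi3⟩ := ihk h0 h
          exact ⟨i, by omega, hi2, hi3⟩
    have h0 : p.getVert 0 ∈ A := by rw [SimpleGraph.Walk.getVert_zero]; exact hxA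
    have hnn : p.getVert n ∉ A := by
      rw [← hp, SimpleGraph.Walk.getVert_length]; exact hyA
    obtain ⟨i, hi, hPi, hPi1⟩ := cross (fun i => p.getVert i ∈ A) n h0 hnn
    refine ⟨⟨i, hi⟩, ?_⟩
    exact half_eq_W hX hA (hadj ⟨i, hi⟩) hPi hPi1

/-- The separating halfspaces, as a set of the subtype of halfspaces. -/
def Sep (X : SimpleGraph V) (x y : V) : Set {A : Set V // IsHalf X A} :=
  {A | x ∈ A.1 ∧ y ∉ A.1}

lemma sep_finite_card (x y : V) : (Sep X x y).Finite ∧ Nat.card (Sep X x y) = X.dist x y := by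
  obtain ⟨g, hprops, hinj, hsurj⟩ := counting hX x y
  have hG : ∀ i : Fin (X.dist x y),
      (⟨g i, (hprops i).1⟩ : {A : Set V // IsHalf X A}) ∈ Sep X x y :=
    fun i => ⟨(hprops i).2.1, (hprops i).2.2⟩
  let G : Fin (X.dist x y) → Sep X x y := fun i => ⟨⟨g i, (hprops i).1⟩, hG i⟩
  have hbij : Function.Bijective G := by
    constructor
    · intro i j hij
      apply hinj
      have := congrArg (fun z => (z : Sep X x y).1.1) hij
      exact this
    · rintro ⟨⟨A, hA⟩, hxA, hyA⟩
      obtain ⟨i, hi⟩ := hsurj A hA hxA hyA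
      exact ⟨i, by simp only [G]; exact Subtype.ext (Subtype.ext hi.symm)⟩
  have hfin : Finite (Sep X x y) := Finite.of_surjective G hbij.surjective
  refine ⟨Set.finite_coe_iff.mp hfin, ?_⟩
  rw [← Nat.card_eq_of_bijective G hbij]
  simp

end Counting

end MedianCompression

open MedianCompression in
open scoped ENNReal in
/-- A connected median graph admits a map `f` to a Hilbert space `ℓ²(ι, ℝ)` with
`‖f x - f y‖² = d(x, y)`; in particular its Hilbert space compression is `≥ 1/2`. -/
theorem median_graph_hilbert_compression {V : Type u} (X : SimpleGraph V)
    (hX : IsMedianGraph X) :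
    ∃ (ι : Type u) (f : V → lp (fun _ : ι => ℝ) 2),
      ∀ x y : V, ‖f x - f y‖ ^ 2 = (X.dist x y : ℝ) := by
  classical
  obtain ⟨o⟩ := hX.1.nonempty
  set ι := {A : Set V // IsHalf X A} with hι
  -- the raw (unnormalised) embedding, relative to basepoint `o`
  let χ : V → ι → ℝ := fun x A => A.1.indicator (fun _ => (1 : ℝ)) x
  have hχ : ∀ x A, χ x A = if x ∈ A.1 then 1 else 0 := by
    intro x A
    by_cases h : x ∈ A.1 <;> simp [χ, h]
  let raw : V → ι → ℝ := fun x A => χ x A - χ o A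
  have hraw_supp : ∀ x A, raw x A ≠ 0 → A ∈ Sep X x o ∪ Sep X o x := by
    intro x A h
    rw [Set.mem_union]
    by_cases h1 : x ∈ A.1 <;> by_cases h2 : o ∈ A.1
    · exfalso; apply h; simp [raw, hχ, h1, h2]
    · exact Or.inl ⟨h1, h2⟩
    · exact Or.inr ⟨h2, h1⟩
    · exfalso; apply h; simp [raw, hχ, h1, h2]
  have htwo : ((2 : ℝ≥0∞)).toReal = (2 : ℝ) := by simp
  have hmem : ∀ x : V, Memℓp (raw x) 2 := by
    intro x
    apply memℓp_gen
    have hfin : ((Sep X x o) ∪ (Sep X o x)).Finite :=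
      ((sep_finite_card hX x o).1).union ((sep_finite_card hX o x).1)
    apply summable_of_ne_finset_zero (s := hfin.toFinset)
    intro A hA
    have : raw x A = 0 := by
      by_contra h
      exact hA (hfin.mem_toFinset.mpr (hraw_supp x A h))
    rw [this]
    simp [htwo]
  let F : V → lp (fun _ : ι => ℝ) 2 := fun x =>
    (Real.sqrt 2)⁻¹ • (⟨raw x, hmem x⟩ : lp (fun _ : ι => ℝ) 2)
  refine ⟨ι, F, ?_⟩
  intro x y
  set n := X.dist x y with hn
  -- the difference, pointwise
  have hdiff : ∀ A : ι, (((F x - F y : lp (fun _ : ι => ℝ) 2)) : ι → ℝ) A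
      = (Real.sqrt 2)⁻¹ * (χ x A - χ y A) := by
    intro A
    have h1 : F x - F y = (Real.sqrt 2)⁻¹ •
        ((⟨raw x, hmem x⟩ : lp (fun _ : ι => ℝ) 2) - ⟨raw y, hmem y⟩) := by
      simp [F, smul_sub]
    rw [h1, lp.coeFn_smul, Pi.smul_apply, lp.coeFn_sub, Pi.sub_apply]
    have h2 : raw x A - raw y A = χ x A - χ y A := by simp only [raw]; ring
    simp only [smul_eq_mul]
    exact congrArg (fun t => (Real.sqrt 2)⁻¹ * t) h2
  -- the two finite sets of separating halfspaces
  obtain ⟨hfin₁, hcard₁⟩ := sep_finite_card hX x y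
  obtain ⟨hfin₂, hcard₂⟩ := sep_finite_card hX y x
  set S : Finset ι := hfin₁.toFinset ∪ hfin₂.toFinset with hS
  have hnorm : ‖F x - F y‖ ^ ((2 : ℝ≥0∞)).toReal
      = ∑' A : ι, ‖(((F x - F y : lp (fun _ : ι => ℝ) 2)) : ι → ℝ) A‖ ^ ((2 : ℝ≥0∞)).toReal :=
    lp.norm_rpow_eq_tsum (by simp [htwo]) (F x - F y)
  have hval : ∀ A : ι, A ∈ S →
      ‖(((F x - F y : lp (fun _ : ι => ℝ) 2)) : ι → ℝ) A‖ ^ ((2 : ℝ≥0∞)).toReal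
        = (2 : ℝ)⁻¹ := by
    intro A hA
    have hxy : (x ∈ A.1 ∧ y ∉ A.1) ∨ (y ∈ A.1 ∧ x ∉ A.1) := by
      rw [hS, Finset.mem_union, hfin₁.mem_toFinset, hfin₂.mem_toFinset] at hA
      exact hA.imp (fun h => ⟨h.1, h.2⟩) (fun h => ⟨h.1, h.2⟩)
    have habs : ‖(((F x - F y : lp (fun _ : ι => ℝ) 2)) : ι → ℝ) A‖ = (Real.sqrt 2)⁻¹ := by
      rw [hdiff A]
      rcases hxy with ⟨h1, h2⟩ | ⟨h1, h2⟩ <;>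
        simp [hχ, h1, h2, abs_of_nonneg, Real.sqrt_nonneg]
    rw [habs, htwo, Real.rpow_two, inv_pow, Real.sq_sqrt (by norm_num : (0:ℝ) ≤ 2)]
  have hzero : ∀ A : ι, A ∉ S →
      ‖(((F x - F y : lp (fun _ : ι => ℝ) 2)) : ι → ℝ) A‖ ^ ((2 : ℝ≥0∞)).toReal = 0 := by
    intro A hA
    have hx : (x ∈ A.1 ↔ y ∈ A.1) := by
      rw [hS, Finset.mem_union, hfin₁.mem_toFinset, hfin₂.mem_toFinset] at hA
      push_neg at hA
      constructor
      · intro h; by_contra h'; exact (hA.1 ⟨h, h'⟩).elim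
      · intro h; by_contra h'; exact (hA.2 ⟨h, h'⟩).elim
    have : (((F x - F y : lp (fun _ : ι => ℝ) 2)) : ι → ℝ) A = 0 := by
      rw [hdiff A]
      by_cases h : x ∈ A.1
      · simp [hχ, h, hx.mp h]
      · have h' : y ∉ A.1 := fun hh => h (hx.mpr hh)
        simp [hχ, h, h']
    rw [this]
    simp [htwo]
  have hsum : (∑' A : ι, ‖(((F x - F y : lp (fun _ : ι => ℝ) 2)) : ι → ℝ) A‖
      ^ ((2 : ℝ≥0∞)).toReal) = ∑ A ∈ S, (2 : ℝ)⁻¹ := by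
    rw [tsum_eq_sum hzero]
    exact Finset.sum_congr rfl hval
  have hdisj : Disjoint hfin₁.toFinset hfin₂.toFinset := by
    rw [Finset.disjoint_left]
    intro A h1 h2
    rw [hfin₁.mem_toFinset] at h1
    rw [hfin₂.mem_toFinset] at h2
    exact h1.2 h2.1
  have hcards : S.card = n + n := by
    rw [hS, Finset.card_union_of_disjoint hdisj]
    have e1 : hfin₁.toFinset.card = n := by
      rw [← Set.ncard_eq_toFinset_card _ hfin₁, ← Nat.card_coe_set_eq]
      exact hcard₁
    have e2 : hfin₂.toFinset.card = n := by
      rw [← Set.ncard_eq_toFinset_card _ hfin₂, ← Nat.card_coe_set_eq]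
      rw [hcard₂, hn, X.dist_comm]
    rw [e1, e2]
  have hfinal : ‖F x - F y‖ ^ ((2 : ℝ≥0∞)).toReal = (n : ℝ) := by
    rw [hnorm, hsum, Finset.sum_const, hcards]
    simp only [nsmul_eq_mul]
    push_cast
    ring
  have h2 : ‖F x - F y‖ ^ (2 : ℕ) = ‖F x - F y‖ ^ ((2 : ℝ≥0∞)).toReal := by
    rw [htwo, Real.rpow_two]
  rw [h2, hfinal]
end

section
/- Fix n ≥ 1 and let V = Fin n × ℕ (the disjoint union of n copies of ℕ, thought of as n rays). Let Hₙ be the set of permutations σ of V for which there exist d : Fin n → ℤ and N : ℕ such that for every i and every k ≥ N, σ(i, k) = (i, k + d(i)) (equality of second coordinates read in ℤ). Then: Hₙ is a subgroup of the permutation group of V; the assignment σ ↦ d is well defined and yields a group homomorphism φ : Hₙ → (Fin n → ℤ, +); the range of φ is exactly { d : Fin n → ℤ | Σᵢ d(i) = 0 }; and the kernel of φ is exactly the set of σ ∈ Hₙ moving only finitely many points. Consequently there is a short exact sequence 1 → S_∞ → Hₙ → ℤ^{n−1} → 1. -/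
/-- `σ` eventually translates the `i`-th ray by `d i`: there is `N` such that for
all `i` and all `k ≥ N`, `σ (i, k) = (i, k + d i)` (second coordinates read in `ℤ`). -/
def EventuallyTranslates {n : ℕ} (σ : Equiv.Perm (Fin n × ℕ)) (d : Fin n → ℤ) : Prop :=
  ∃ N : ℕ, ∀ (i : Fin n) (k : ℕ), N ≤ k →
    (σ (i, k)).1 = i ∧ ((σ (i, k)).2 : ℤ) = (k : ℤ) + d i

namespace Houghton

variable {n : ℕ}

lemma et_one : EventuallyTranslates (1 : Equiv.Perm (Fin n × ℕ)) 0 :=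
  ⟨0, fun i k _ => by simp⟩

lemma et_mul {σ τ : Equiv.Perm (Fin n × ℕ)} {d e : Fin n → ℤ}
    (hσ : EventuallyTranslates σ d) (hτ : EventuallyTranslates τ e) :
    EventuallyTranslates (σ * τ) (d + e) := by
  obtain ⟨N1, h1⟩ := hσ
  obtain ⟨N2, h2⟩ := hτ
  set S : ℕ := Finset.univ.sup fun i => (-e i).toNat with hS
  refine ⟨N1 + N2 + S, fun i k hk => ?_⟩
  have hk2 : N2 ≤ k := by omega
  obtain ⟨ht1, ht2⟩ := h2 i k hk2
  have hei : -e i ≤ (S : ℤ) := by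
    calc -e i ≤ ((-e i).toNat : ℤ) := Int.self_le_toNat _
    _ ≤ (S : ℤ) := by exact_mod_cast Finset.le_sup (f := fun i => (-e i).toNat) (Finset.mem_univ i)
  have hm : (N1 : ℤ) ≤ ((τ (i, k)).2 : ℤ) := by
    rw [ht2]; omega
  have hm' : N1 ≤ (τ (i, k)).2 := by exact_mod_cast hm
  have hτik : τ (i, k) = (i, (τ (i, k)).2) := Prod.ext ht1 rfl
  obtain ⟨hs1, hs2⟩ := h1 i ((τ (i, k)).2) hm'
  constructor
  · show (σ (τ (i, k))).1 = i
    rw [hτik] at *; exact hs1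
  · show ((σ (τ (i, k))).2 : ℤ) = (k : ℤ) + (d + e) i
    rw [hτik]
    rw [hs2, ht2]; simp [Pi.add_apply]; ring

lemma et_inv {σ : Equiv.Perm (Fin n × ℕ)} {d : Fin n → ℤ}
    (hσ : EventuallyTranslates σ d) : EventuallyTranslates σ⁻¹ (-d) := by
  obtain ⟨N, h⟩ := hσ
  set S : ℕ := Finset.univ.sup fun i => (d i).toNat with hS
  refine ⟨N + S, fun i k hk => ?_⟩
  have hdi : d i ≤ (S : ℤ) := by
    calc d i ≤ ((d i).toNat : ℤ) := Int.self_le_toNat _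
    _ ≤ (S : ℤ) := by exact_mod_cast Finset.le_sup (f := fun i => (d i).toNat) (Finset.mem_univ i)
  have hnn : (0 : ℤ) ≤ (k : ℤ) - d i := by omega
  set m : ℕ := ((k : ℤ) - d i).toNat with hm
  have hmz : (m : ℤ) = (k : ℤ) - d i := Int.toNat_of_nonneg hnn
  have hmN : N ≤ m := by
    have : (N : ℤ) ≤ (m : ℤ) := by rw [hmz]; omega
    exact_mod_cast this
  obtain ⟨h1, h2⟩ := h i m hmN
  have heq : σ (i, m) = (i, k) := by
    refine Prod.ext h1 ?_
    have : ((σ (i, m)).2 : ℤ) = (k : ℤ) := by rw [h2, hmz]; ring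
    exact_mod_cast this
  have : σ⁻¹ (i, k) = (i, m) := by
    rw [← heq]; exact σ.symm_apply_apply _
  rw [this]
  exact ⟨rfl, by rw [hmz]; simp; ring⟩

lemma et_unique {σ : Equiv.Perm (Fin n × ℕ)} {d e : Fin n → ℤ}
    (hd : EventuallyTranslates σ d) (he : EventuallyTranslates σ e) : d = e := by
  obtain ⟨N1, h1⟩ := hd
  obtain ⟨N2, h2⟩ := he
  funext i
  have a1 := (h1 i (N1 + N2) (by omega)).2
  have a2 := (h2 i (N1 + N2) (by omega)).2
  omega

lemma et_sum_eq_zero {σ : Equiv.Perm (Fin n × ℕ)} {d : Fin n → ℤ}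
    (hσ : EventuallyTranslates σ d) : ∑ i, d i = 0 := by
  obtain ⟨N0, h⟩ := hσ
  set S : ℕ := Finset.univ.sup fun i => (d i).natAbs with hS
  have hdS : ∀ i, (d i).natAbs ≤ S := fun i =>
    Finset.le_sup (f := fun i => (d i).natAbs) (Finset.mem_univ i)
  set N : ℕ := N0 + S with hN
  have hnn : ∀ i, (0 : ℤ) ≤ (N : ℤ) + d i := by
    intro i
    have := hdS i
    have h2 : -(S : ℤ) ≤ d i := by
      have h3 : ((d i).natAbs : ℤ) ≤ (S : ℤ) := by exact_mod_cast this
      omega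
    omega
  set Af : Finset (Fin n × ℕ) := Finset.univ ×ˢ Finset.range N with hAf
  set Bf : Finset (Fin n × ℕ) :=
    Finset.univ.biUnion (fun i => {i} ×ˢ Finset.range ((N : ℤ) + d i).toNat) with hBf
  have memB : ∀ p : Fin n × ℕ, p ∈ Bf ↔ ((p.2 : ℤ) < (N : ℤ) + d p.1) := by
    intro ⟨j, m⟩
    simp only [hBf, Finset.mem_biUnion, Finset.mem_product, Finset.mem_singleton,
      Finset.mem_range, Finset.mem_univ, true_and]
    constructor
    · rintro ⟨i, hi, hm⟩
      subst hi
      have := Int.lt_toNat.mp hm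
      omega
    · intro hm
      exact ⟨j, rfl, by omega⟩
  have himg : Af.image σ = Bf := by
    ext ⟨j, m⟩
    rw [memB]
    simp only [hAf, Finset.mem_image, Finset.mem_product, Finset.mem_univ, true_and,
      Finset.mem_range]
    constructor
    · rintro ⟨⟨i, k⟩, hk, hσik⟩
      by_contra hge
      push_neg at hge
      have hnn2 : (0 : ℤ) ≤ (m : ℤ) - d j := by
        have := hnn j; omega
      set m' : ℕ := ((m : ℤ) - d j).toNat with hm'
      have hm'z : (m' : ℤ) = (m : ℤ) - d j := Int.toNat_of_nonneg hnn2
      have hm'N : N ≤ m' := by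
        have : (N : ℤ) ≤ (m' : ℤ) := by omega
        exact_mod_cast this
      obtain ⟨e1, e2⟩ := h j m' (by omega)
      have : σ (j, m') = (j, m) := by
        refine Prod.ext e1 ?_
        have : ((σ (j, m')).2 : ℤ) = (m : ℤ) := by omega
        exact_mod_cast this
      have heq : (j, m') = (i, k) := σ.injective (by rw [this, hσik])
      have : m' = k := (Prod.ext_iff.mp heq).2
      omega
    · intro hm
      obtain ⟨⟨i, k⟩, hx⟩ : ∃ x, σ x = (j, m) := ⟨σ.symm (j, m), σ.apply_symm_apply _⟩
      refine ⟨(i, k), ?_, hx⟩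
      by_contra hge
      push_neg at hge
      obtain ⟨e1, e2⟩ := h i k (by omega)
      rw [hx] at e1 e2
      simp only [] at e1
      subst e1
      omega
  have hcard : Af.card = Bf.card := by
    rw [← himg, Finset.card_image_of_injective _ σ.injective]
  have hA : Af.card = n * N := by
    simp [hAf, Finset.card_product]
  have hB : Bf.card = ∑ i, ((N : ℤ) + d i).toNat := by
    rw [hBf, Finset.card_biUnion]
    · simp [Finset.card_product]
    · intro i _ j _ hij
      simp only [Finset.disjoint_left]
      rintro ⟨a, b⟩ ha hb
      simp only [Finset.mem_product, Finset.mem_singleton] at ha hb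
      exact hij (ha.1 ▸ hb.1)
  have hcast : ((∑ i, ((N : ℤ) + d i).toNat : ℕ) : ℤ) = ∑ i, ((N : ℤ) + d i) := by
    push_cast
    refine Finset.sum_congr rfl fun i _ => Int.toNat_of_nonneg (hnn i)
  have : ((n * N : ℕ) : ℤ) = ∑ i, ((N : ℤ) + d i) := by
    rw [← hcast, ← hA, ← hB, hcard]
  rw [Finset.sum_add_distrib, Finset.sum_const, Finset.card_univ, Fintype.card_fin,
    nsmul_eq_mul] at this
  push_cast at this
  linarith

def genFun (i j : Fin n) : Fin n × ℕ → Fin n × ℕ := fun p =>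
  if p.1 = i then (i, p.2 + 1)
  else if p.1 = j then (match p.2 with | 0 => (i, 0) | Nat.succ k => (j, k))
  else p

def gen (i j : Fin n) (hij : i ≠ j) : Equiv.Perm (Fin n × ℕ) where
  toFun := genFun i j
  invFun := fun p =>
    if p.1 = j then (j, p.2 + 1)
    else if p.1 = i then (match p.2 with | 0 => (j, 0) | Nat.succ k => (i, k))
    else p
  left_inv := by
    rintro ⟨a, k⟩
    by_cases hai : a = i
    · subst hai
      simp [genFun, hij, hij.symm]
    · by_cases haj : a = j
      · subst haj
        cases k with
        | zero => simp [genFun, hij, hij.symm, hai]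
        | succ k => simp [genFun, hij, hij.symm, hai]
      · simp [genFun, hai, haj]
  right_inv := by
    rintro ⟨a, k⟩
    by_cases haj : a = j
    · subst haj
      simp [genFun, hij, hij.symm]
    · by_cases hai : a = i
      · subst hai
        cases k with
        | zero => simp [genFun, hij, hij.symm, haj]
        | succ k => simp [genFun, hij, hij.symm, haj]
      · simp [genFun, hai, haj]

lemma et_gen (i j : Fin n) (hij : i ≠ j) :
    EventuallyTranslates (gen i j hij) (Pi.single i 1 - Pi.single j 1) := by
  refine ⟨1, fun a k hk => ?_⟩
  have : (gen i j hij) (a, k) = genFun i j (a, k) := rfl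
  rw [this]
  by_cases hai : a = i
  · subst hai
    simp [genFun, Pi.single_apply, hij, hij.symm]
  · by_cases haj : a = j
    · subst haj
      obtain ⟨k, rfl⟩ : ∃ m, k = m + 1 := ⟨k - 1, by omega⟩
      simp [genFun, hai, Pi.single_apply, hij, hij.symm]
    · simp [genFun, hai, haj, Pi.single_apply]

def realizable (n : ℕ) : AddSubgroup (Fin n → ℤ) where
  carrier := {d | ∃ σ : Equiv.Perm (Fin n × ℕ), EventuallyTranslates σ d}
  zero_mem' := ⟨1, et_one⟩
  add_mem' := by
    rintro d e ⟨σ, hσ⟩ ⟨τ, hτ⟩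
    exact ⟨σ * τ, et_mul hσ hτ⟩
  neg_mem' := by
    rintro d ⟨σ, hσ⟩
    exact ⟨σ⁻¹, et_inv hσ⟩

lemma zero_sum_realizable (hn : 1 ≤ n) {d : Fin n → ℤ} (hd : ∑ i, d i = 0) :
    ∃ σ : Equiv.Perm (Fin n × ℕ), EventuallyTranslates σ d := by
  set i0 : Fin n := ⟨0, hn⟩ with hi0
  have hgen : ∀ i : Fin n, (Pi.single i 1 - Pi.single i0 1 : Fin n → ℤ) ∈ realizable n := by
    intro i
    by_cases hi : i = i0
    · subst hi; simpa using (realizable n).zero_mem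
    · exact ⟨gen i i0 hi, et_gen i i0 hi⟩
  have hdd : d = ∑ i, d i • (Pi.single i 1 - Pi.single i0 1 : Fin n → ℤ) := by
    funext j
    simp only [Finset.sum_apply, Pi.smul_apply, Pi.sub_apply, Pi.single_apply, smul_eq_mul,
      mul_sub, Finset.sum_sub_distrib]
    have h1 : (∑ x, d x * if j = x then 1 else 0) = d j := by
      rw [Finset.sum_congr rfl (fun x _ => by rw [mul_ite, mul_one, mul_zero])]
      simp [Finset.sum_ite_eq]
    by_cases hj : j = i0
    · subst hj; simp [h1, hd]
    · simp [h1, hj]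
  have : d ∈ realizable n := by
    rw [hdd]
    exact AddSubgroup.sum_mem _ fun i _ => AddSubgroup.zsmul_mem _ (hgen i) _
  exact this

lemma finite_support_et {σ : Equiv.Perm (Fin n × ℕ)}
    (hfin : {x : Fin n × ℕ | σ x ≠ x}.Finite) : EventuallyTranslates σ 0 := by
  set F := hfin.toFinset with hF
  refine ⟨(F.sup fun x => x.2) + 1, fun i k hk => ?_⟩
  have : σ (i, k) = (i, k) := by
    by_contra hne
    have hmem : (i, k) ∈ F := hfin.mem_toFinset.mpr hne
    have h2 : k ≤ F.sup fun x => x.2 := Finset.le_sup (f := fun x : Fin n × ℕ => x.2) hmem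
    omega
  rw [this]
  simp

lemma et_zero_finite_support {σ : Equiv.Perm (Fin n × ℕ)}
    (h : EventuallyTranslates σ 0) : {x : Fin n × ℕ | σ x ≠ x}.Finite := by
  obtain ⟨N, h⟩ := h
  apply Set.Finite.subset
    (((Finset.univ : Finset (Fin n)) ×ˢ Finset.range N : Finset (Fin n × ℕ)).finite_toSet)
  rintro ⟨i, k⟩ hx
  simp only [Set.mem_setOf_eq] at hx
  simp only [Finset.coe_product, Set.mem_prod, Finset.coe_range, Set.mem_Iio, Finset.coe_univ,
    Set.mem_univ, true_and]
  by_contra hk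
  push_neg at hk
  obtain ⟨e1, e2⟩ := h i k hk
  refine hx (Prod.ext e1 ?_)
  simp only [Pi.zero_apply, add_zero] at e2
  exact_mod_cast e2

/-- The Houghton subgroup. -/
def H (n : ℕ) : Subgroup (Equiv.Perm (Fin n × ℕ)) where
  carrier := {σ | ∃ d : Fin n → ℤ, EventuallyTranslates σ d}
  one_mem' := ⟨0, et_one⟩
  mul_mem' := by
    rintro σ τ ⟨d, hd⟩ ⟨e, he⟩
    exact ⟨d + e, et_mul hd he⟩
  inv_mem' := by
    rintro σ ⟨d, hd⟩
    exact ⟨-d, et_inv hd⟩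

noncomputable def dOf (σ : H n) : Fin n → ℤ := σ.2.choose

lemma et_dOf (σ : H n) : EventuallyTranslates (σ : Equiv.Perm (Fin n × ℕ)) (dOf σ) :=
  σ.2.choose_spec

lemma dOf_eq {σ : H n} {d : Fin n → ℤ}
    (h : EventuallyTranslates (σ : Equiv.Perm (Fin n × ℕ)) d) : dOf σ = d :=
  et_unique (et_dOf σ) h

noncomputable def phi (n : ℕ) : H n →* Multiplicative (Fin n → ℤ) :=
  MonoidHom.mk' (fun σ => Multiplicative.ofAdd (dOf σ)) (by
    intro σ τ
    rw [← ofAdd_add]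
    exact congrArg Multiplicative.ofAdd (dOf_eq (et_mul (et_dOf σ) (et_dOf τ))))

lemma phi_apply (σ : H n) : phi n σ = Multiplicative.ofAdd (dOf σ) := rfl

end Houghton

/-- The Houghton group `Hₙ`: the permutations of the `n` rays `Fin n × ℕ` that
eventually translate each ray form a subgroup of `Equiv.Perm (Fin n × ℕ)`; the
assignment `σ ↦ d` is well defined and gives a homomorphism `φ : Hₙ → ℤⁿ` whose
range is the zero-sum subgroup `{d ∣ Σᵢ d i = 0} ≅ ℤ^{n-1}` and whose kernel is
the group `S_∞` of finitely supported permutations. Hence there is a short exact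
sequence `1 → S_∞ → Hₙ → ℤ^{n-1} → 1`. -/
theorem houghton_short_exact_sequence (n : ℕ) (hn : 1 ≤ n) :
    ∃ (H : Subgroup (Equiv.Perm (Fin n × ℕ)))
      (φ : H →* Multiplicative (Fin n → ℤ)),
      (∀ σ : Equiv.Perm (Fin n × ℕ),
        σ ∈ H ↔ ∃ d : Fin n → ℤ, EventuallyTranslates σ d) ∧
      (∀ σ : H, EventuallyTranslates (σ : Equiv.Perm (Fin n × ℕ))
        (Multiplicative.toAdd (φ σ))) ∧
      (∀ d : Fin n → ℤ,
        Multiplicative.ofAdd d ∈ φ.range ↔ ∑ i, d i = 0) ∧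
      (∀ σ : H, σ ∈ φ.ker ↔
        {x : Fin n × ℕ | (σ : Equiv.Perm (Fin n × ℕ)) x ≠ x}.Finite) := by
  refine ⟨Houghton.H n, Houghton.phi n, fun σ => Iff.rfl, ?_, ?_, ?_⟩
  · intro σ
    exact Houghton.et_dOf σ
  · intro d
    constructor
    · rintro ⟨σ, hσ⟩
      rw [Houghton.phi_apply] at hσ
      have hd : Houghton.dOf σ = d := Multiplicative.ofAdd.injective hσ
      exact Houghton.et_sum_eq_zero (hd ▸ Houghton.et_dOf σ)
    · intro hd
      obtain ⟨σ, hσ⟩ := Houghton.zero_sum_realizable hn hd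
      exact ⟨⟨σ, ⟨d, hσ⟩⟩, congrArg Multiplicative.ofAdd (Houghton.dOf_eq hσ)⟩
  · intro σ
    rw [MonoidHom.mem_ker, Houghton.phi_apply]
    constructor
    · intro h
      have hd : Houghton.dOf σ = 0 := Multiplicative.ofAdd.injective h
      exact Houghton.et_zero_finite_support (hd ▸ Houghton.et_dOf σ)
    · intro h
      have hd : Houghton.dOf σ = 0 := Houghton.dOf_eq (Houghton.finite_support_et h)
      rw [hd]
      rfl
end
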